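/- arXiv:0901.0695 — 6 statements merged into one kernel-verified Lean document; each statement's English description precedes it below -/
import Mathlib

section
/- Let (X,d) be a finite metric space and let ℘ = sup{p ≥ 0 : (X,d) has p-negative type}. If ℘ < ∞, then there exists a normalized (s,t)-simplex D(ω) = [a_j(m_j); b_i(n_i)]_{s,t} in X such that Σ_{1≤j1<j2≤s} m_{j1} m_{j2} d(a_{j1},a_{j2})^℘ + Σ_{1≤i1<i2≤t} n_{i1} n_{i2} d(b_{i1},b_{i2})^℘ = Σ_{j=1}^{s} Σ_{i=1}^{t} m_j n_i d(a_j,b_i)^℘, i.e. γ_D^℘(ω) = 0. -/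
open scoped BigOperators

/-- The kernel `d(x,y)^p`, with the convention that it vanishes on the diagonal
(this matters only when `p = 0`). -/
noncomputable def negKer {X : Type*} [MetricSpace X] (p : ℝ) (x y : X) : ℝ :=
  @ite ℝ (x = y) (Classical.dec _) 0 (dist x y ^ p)

/-- `(X,d)` has `p`-negative type: for all `k ≥ 2`, pairwise distinct points
`x₁,…,x_k` and reals `η₁,…,η_k` summing to zero,
`∑_{i,j} d(xᵢ,xⱼ)^p ηᵢ ηⱼ ≤ 0`. -/
def HasNegType (X : Type*) [MetricSpace X] (p : ℝ) : Prop :=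
  ∀ (k : ℕ), 2 ≤ k → ∀ (x : Fin k → X), Function.Injective x →
    ∀ (η : Fin k → ℝ), (∑ i, η i) = 0 →
      (∑ i, ∑ j, negKer p (x i) (x j) * η i * η j) ≤ 0

/-- `(X,d)` has strict `p`-negative type: `p`-negative type, with strict
inequality whenever `η ≠ 0`. -/
def HasStrictNegType (X : Type*) [MetricSpace X] (p : ℝ) : Prop :=
  HasNegType X p ∧
  ∀ (k : ℕ), 2 ≤ k → ∀ (x : Fin k → X), Function.Injective x →
    ∀ (η : Fin k → ℝ), (∑ i, η i) = 0 → η ≠ 0 →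
      (∑ i, ∑ j, negKer p (x i) (x j) * η i * η j) < 0

/-- A normalized `(s,t)`-simplex in `X`: `s+t` pairwise distinct points
`a₁,…,a_s,b₁,…,b_t` with positive weights `m`, `n`, each family summing to `1`. -/
structure IsNormSimplex {X : Type*} [MetricSpace X] {s t : ℕ}
    (a : Fin s → X) (b : Fin t → X) (m : Fin s → ℝ) (n : Fin t → ℝ) : Prop where
  inj_a : Function.Injective a
  inj_b : Function.Injective b
  disj : ∀ j i, a j ≠ b i
  m_pos : ∀ j, 0 < m j
  n_pos : ∀ i, 0 < n i
  m_sum : (∑ j, m j) = 1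
  n_sum : (∑ i, n i) = 1

/-- The `p`-negative type simplex gap `γ_D^p(ω)` of a loaded `(s,t)`-simplex. -/
noncomputable def simplexGap {X : Type*} [MetricSpace X] (p : ℝ) {s t : ℕ}
    (a : Fin s → X) (b : Fin t → X) (m : Fin s → ℝ) (n : Fin t → ℝ) : ℝ :=
  (∑ j, ∑ i, m j * n i * dist (a j) (b i) ^ p)
    - (∑ j₁, ∑ j₂, if j₁ < j₂ then m j₁ * m j₂ * dist (a j₁) (a j₂) ^ p else 0)
    - (∑ i₁, ∑ i₂, if i₁ < i₂ then n i₁ * n i₂ * dist (b i₁) (b i₂) ^ p else 0)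

section AuxNegType
variable {X : Type*} [MetricSpace X]


lemma negKer_self (p : ℝ) (x : X) : negKer p x x = 0 := if_pos rfl

lemma negKer_of_ne {x y : X} (h : x ≠ y) (p : ℝ) : negKer p x y = dist x y ^ p := if_neg h

lemma negKer_comm (p : ℝ) (x y : X) : negKer p x y = negKer p y x := by
  by_cases h : x = y
  · simp [h]
  · rw [negKer_of_ne h, negKer_of_ne (Ne.symm h), dist_comm]

lemma continuous_negKer (x y : X) : Continuous fun p => negKer p x y := by
  by_cases h : x = y
  · have : (fun p => negKer p x y) = fun _ => 0 := by
      funext p; simp [negKer, h]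
    rw [this]; exact continuous_const
  · have hd : 0 < dist x y := dist_pos.mpr h
    have : (fun p => negKer p x y) = fun p => Real.exp (Real.log (dist x y) * p) := by
      funext p; rw [negKer_of_ne h, Real.rpow_def_of_pos hd]
    rw [this]; exact Real.continuous_exp.comp (continuous_const.mul continuous_id)

lemma hasNegType_zero : HasNegType X 0 := by
  intro k _ x hx η hη
  have hterm : ∀ i j : Fin k, negKer 0 (x i) (x j) * η i * η j
      = η i * η j - (if i = j then η i * η j else 0) := by
    intro i j
    by_cases h : i = j
    · subst h; simp [negKer_self]
    · rw [negKer_of_ne (fun hc => h (hx hc)), Real.rpow_zero, if_neg h]; ring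
  have : (∑ i, ∑ j, negKer 0 (x i) (x j) * η i * η j)
      = (∑ i, η i) * (∑ j, η j) - ∑ i, η i * η i := by
    rw [Finset.sum_mul_sum, ← Finset.sum_sub_distrib]
    refine Finset.sum_congr rfl fun i _ => ?_
    calc (∑ j, negKer 0 (x i) (x j) * η i * η j)
        = ∑ j, (η i * η j - if i = j then η i * η j else 0) :=
          Finset.sum_congr rfl fun j _ => hterm i j
      _ = (∑ j, η i * η j) - ∑ j, (if i = j then η i * η j else 0) :=
          Finset.sum_sub_distrib _ _
      _ = (∑ j, η i * η j) - η i * η i := by rw [Finset.sum_ite_eq]; simp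
  rw [this, hη]
  have : (0:ℝ) ≤ ∑ i, η i * η i := Finset.sum_nonneg fun i _ => mul_self_nonneg _
  linarith

lemma hasNegType_iff {N : ℕ} (hN : 2 ≤ N) (e : Fin N ≃ X) (p : ℝ) :
    HasNegType X p ↔ ∀ η : Fin N → ℝ, (∑ i, η i) = 0 →
      (∑ i, ∑ j, negKer p (e i) (e j) * η i * η j) ≤ 0 := by
  classical
  constructor
  · intro h η hη; exact h N hN e e.injective η hη
  · intro h k hk x hx η hη
    set g : Fin k → Fin N := fun i => e.symm (x i) with hg
    have hginj : Function.Injective g := fun i j hij => hx (e.symm.injective hij)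
    set η' : Fin N → ℝ := fun j => if hj : ∃ i, g i = j then η hj.choose else 0 with hη'def
    have hη'g : ∀ i, η' (g i) = η i := by
      intro i
      have hex : ∃ i', g i' = g i := ⟨i, rfl⟩
      simp only [hη'def, dif_pos hex]
      rw [hginj hex.choose_spec]
    have hη'0 : ∀ j, j ∉ Finset.univ.image g → η' j = 0 := by
      intro j hj
      have hne : ¬ ∃ i, g i = j := by
        rintro ⟨i, rfl⟩; exact hj (Finset.mem_image_of_mem g (Finset.mem_univ i))
      simp [hη'def, hne]
    have hinj' : ∀ a ∈ Finset.univ, ∀ b ∈ Finset.univ, g a = g b → a = b :=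
      fun a _ b _ hab => hginj hab
    have hsum : (∑ j, η' j) = 0 := by
      rw [← Finset.sum_subset (Finset.subset_univ (Finset.univ.image g))
        (fun j _ hj => hη'0 j hj)]
      rw [Finset.sum_image hinj']
      simpa [hη'g] using hη
    have hmain := h η' hsum
    have key : (∑ i, ∑ j, negKer p (e i) (e j) * η' i * η' j)
        = ∑ i, ∑ j, negKer p (x i) (x j) * η i * η j := by
      rw [← Finset.sum_subset (Finset.subset_univ (Finset.univ.image g))
        (fun i _ hi => Finset.sum_eq_zero fun j _ => by rw [hη'0 i hi]; ring)]
      rw [Finset.sum_image hinj']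
      refine Finset.sum_congr rfl fun i _ => ?_
      rw [← Finset.sum_subset (Finset.subset_univ (Finset.univ.image g))
        (fun j _ hj => by rw [hη'0 j hj]; ring)]
      rw [Finset.sum_image hinj']
      refine Finset.sum_congr rfl fun j _ => ?_
      have h1 : e (g i) = x i := by simp [hg]
      have h2 : e (g j) = x j := by simp [hg]
      rw [h1, h2, hη'g, hη'g]
    rw [key] at hmain
    exact hmain

lemma quad_smul {N : ℕ} (K : Fin N → Fin N → ℝ) (c : ℝ) (η : Fin N → ℝ) :
    (∑ i, ∑ j, K i j * (c * η i) * (c * η j)) = c ^ 2 * ∑ i, ∑ j, K i j * η i * η j := by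
  rw [Finset.mul_sum]
  refine Finset.sum_congr rfl fun i _ => ?_
  rw [Finset.mul_sum]
  exact Finset.sum_congr rfl fun j _ => by ring

lemma exists_null [Fintype X] {N : ℕ} (hN : 2 ≤ N) (e : Fin N ≃ X)
    (hbdd : BddAbove {p : ℝ | 0 ≤ p ∧ HasNegType X p}) :
    ∃ η : Fin N → ℝ, η ≠ 0 ∧ (∑ i, η i) = 0 ∧
      (∑ i, ∑ j, negKer (sSup {p : ℝ | 0 ≤ p ∧ HasNegType X p}) (e i) (e j) * η i * η j) = 0 := by
  classical
  set P := {p : ℝ | 0 ≤ p ∧ HasNegType X p} with hP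
  have hP0 : (0:ℝ) ∈ P := ⟨le_refl 0, hasNegType_zero⟩
  set W := sSup P with hW
  have hW0 : 0 ≤ W := le_csSup hbdd hP0
  have hQcont : ∀ η : Fin N → ℝ,
      Continuous fun p => ∑ i, ∑ j, negKer p (e i) (e j) * η i * η j := by
    intro η
    refine continuous_finset_sum _ fun i _ => continuous_finset_sum _ fun j _ => ?_
    exact ((continuous_negKer _ _).mul continuous_const).mul continuous_const
  have hWP : HasNegType X W := by
    rw [hasNegType_iff hN e]
    intro η hη
    have hPC : P ⊆ (fun p => ∑ i, ∑ j, negKer p (e i) (e j) * η i * η j) ⁻¹' Set.Iic 0 :=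
      fun p hp => (hasNegType_iff hN e p).mp hp.2 η hη
    have hclosed : IsClosed
        ((fun p => ∑ i, ∑ j, negKer p (e i) (e j) * η i * η j) ⁻¹' Set.Iic 0) :=
      isClosed_Iic.preimage (hQcont η)
    exact closure_minimal hPC hclosed (csSup_mem_closure ⟨0, hP0⟩ hbdd)
  by_contra hno
  push_neg at hno
  have hstrict : ∀ η : Fin N → ℝ, (∑ i, η i) = 0 → η ≠ 0 →
      (∑ i, ∑ j, negKer W (e i) (e j) * η i * η j) < 0 := by
    intro η hη hne
    exact lt_of_le_of_ne ((hasNegType_iff hN e W).mp hWP η hη) (hno η hne hη)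
  set S : Set (Fin N → ℝ) := {η | (∑ i, η i) = 0 ∧ (∑ i, η i ^ 2) = 1} with hS
  have hsq_le : ∀ η ∈ S, ∀ i, |η i| ≤ 1 := by
    intro η hη i
    have h1 : η i ^ 2 ≤ 1 := by
      rw [← hη.2]
      exact Finset.single_le_sum (fun j _ => sq_nonneg (η j)) (Finset.mem_univ i)
    rw [abs_le_one_iff_mul_self_le_one]
    nlinarith [h1]
  have hSclosed : IsClosed S := by
    have h1 : IsClosed {η : Fin N → ℝ | (∑ i, η i) = 0} :=
      isClosed_eq (continuous_finset_sum _ fun i _ => continuous_apply i) continuous_const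
    have h2 : IsClosed {η : Fin N → ℝ | (∑ i, η i ^ 2) = 1} :=
      isClosed_eq (continuous_finset_sum _ fun i _ => (continuous_apply i).pow 2)
        continuous_const
    exact h1.inter h2
  have hSbdd : Bornology.IsBounded S := by
    refine (Metric.isBounded_closedBall (x := (0 : Fin N → ℝ)) (r := 1)).subset ?_
    intro η hη
    rw [Metric.mem_closedBall, dist_zero_right, pi_norm_le_iff_of_nonneg zero_le_one]
    intro i
    simpa using hsq_le η hη i
  have hScompact : IsCompact S := Metric.isCompact_of_isClosed_isBounded hSclosed hSbdd
  obtain ⟨i0, i1, hne01⟩ : ∃ i0 i1 : Fin N, i0 ≠ i1 :=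
    ⟨⟨0, by omega⟩, ⟨1, by omega⟩, by simp [Fin.ext_iff]⟩
  set c : ℝ := Real.sqrt (1/2) with hc
  have hc2 : c ^ 2 = 1/2 := Real.sq_sqrt (by norm_num)
  set η₀ : Fin N → ℝ := fun i => (if i = i0 then c else 0) + (if i = i1 then -c else 0)
    with hη₀
  have hη₀S : η₀ ∈ S := by
    constructor
    · simp only [hη₀]
      rw [Finset.sum_add_distrib, Finset.sum_ite_eq' Finset.univ,
        Finset.sum_ite_eq' Finset.univ]
      simp
    · have hpt : ∀ i, η₀ i ^ 2 = (if i = i0 then c^2 else 0) + (if i = i1 then c^2 else 0) := by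
        intro i
        simp only [hη₀]
        by_cases h0 : i = i0
        · subst h0
          rw [if_pos rfl, if_pos rfl, if_neg hne01, if_neg hne01]
          ring
        · by_cases h1 : i = i1
          · subst h1
            rw [if_neg h0, if_pos rfl, if_neg h0, if_pos rfl]
            ring
          · rw [if_neg h0, if_neg h1, if_neg h0, if_neg h1]
            ring
      show (∑ i, η₀ i ^ 2) = 1
      rw [Finset.sum_congr rfl fun i _ => hpt i, Finset.sum_add_distrib,
        Finset.sum_ite_eq' Finset.univ, Finset.sum_ite_eq' Finset.univ]
      simp only [Finset.mem_univ, if_true]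
      rw [hc2]; norm_num
  have hQcont' : Continuous fun η : Fin N → ℝ =>
      ∑ i, ∑ j, negKer W (e i) (e j) * η i * η j := by
    refine continuous_finset_sum _ fun i _ => continuous_finset_sum _ fun j _ => ?_
    exact (continuous_const.mul (continuous_apply i)).mul (continuous_apply j)
  obtain ⟨ηs, hηsS, hmax⟩ := hScompact.exists_isMaxOn ⟨η₀, hη₀S⟩ hQcont'.continuousOn
  have hηs0 : ηs ≠ 0 := by
    intro h
    have h2 := hηsS.2
    rw [h] at h2
    simp at h2
  set δ : ℝ := -(∑ i, ∑ j, negKer W (e i) (e j) * ηs i * ηs j) with hδ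
  have hδpos : 0 < δ := by
    have := hstrict ηs hηsS.1 hηs0
    rw [hδ]; linarith
  set h : ℝ → ℝ := fun p => ∑ i, ∑ j, |negKer p (e i) (e j) - negKer W (e i) (e j)| with hh
  have hhcont : Continuous h := by
    simp only [hh]
    refine continuous_finset_sum _ fun i _ => continuous_finset_sum _ fun j _ => ?_
    exact ((continuous_negKer _ _).sub continuous_const).abs
  have hh0 : h W = 0 := by simp [hh]
  have hev : ∀ᶠ p in nhds W, h p < δ := by
    have ht : Filter.Tendsto h (nhds W) (nhds 0) := by
      rw [← hh0]; exact hhcont.continuousAt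
    exact ht.eventually_lt_const hδpos
  rw [Metric.eventually_nhds_iff] at hev
  obtain ⟨ε, hε, hev⟩ := hev
  set q : ℝ := W + ε/2 with hq
  have hhq : h q < δ := by
    refine hev ?_
    rw [hq, Real.dist_eq, add_sub_cancel_left, abs_of_pos (by linarith)]
    linarith
  have hqP : q ∈ P := by
    refine ⟨by rw [hq]; linarith, ?_⟩
    rw [hasNegType_iff hN e]
    intro η hη
    by_cases hη0 : η = 0
    · subst hη0; simp
    · have hr2pos : 0 < ∑ i, η i ^ 2 := by
        obtain ⟨i, hi⟩ := Function.ne_iff.mp hη0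
        exact Finset.sum_pos' (fun j _ => sq_nonneg _)
          ⟨i, Finset.mem_univ i, pow_two_pos_of_ne_zero hi⟩
      set r : ℝ := Real.sqrt (∑ i, η i ^ 2) with hr
      have hrpos : 0 < r := Real.sqrt_pos.mpr hr2pos
      have hr2 : r ^ 2 = ∑ i, η i ^ 2 := Real.sq_sqrt hr2pos.le
      set ηh : Fin N → ℝ := fun i => r⁻¹ * η i with hηh
      have hηhS : ηh ∈ S := by
        constructor
        · show (∑ i, ηh i) = 0
          simp only [hηh]
          rw [← Finset.mul_sum, hη, mul_zero]
        · show (∑ i, ηh i ^ 2) = 1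
          simp only [hηh]
          have hptw : ∀ i : Fin N, (r⁻¹ * η i) ^ 2 = r⁻¹ ^ 2 * η i ^ 2 := fun i => by ring
          rw [Finset.sum_congr rfl fun i _ => hptw i, ← Finset.mul_sum, ← hr2]
          field_simp
      have hd1 : (∑ i, ∑ j, negKer q (e i) (e j) * ηh i * ηh j)
          = (∑ i, ∑ j, negKer W (e i) (e j) * ηh i * ηh j)
            + ∑ i, ∑ j, (negKer q (e i) (e j) - negKer W (e i) (e j)) * ηh i * ηh j := by
        rw [← Finset.sum_add_distrib]
        refine Finset.sum_congr rfl fun i _ => ?_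
        rw [← Finset.sum_add_distrib]
        exact Finset.sum_congr rfl fun j _ => by ring
      have hb1 : (∑ i, ∑ j, negKer W (e i) (e j) * ηh i * ηh j) ≤ -δ := by
        have hm := hmax hηhS
        rw [hδ]
        simpa using hm
      have hb2 : (∑ i, ∑ j, (negKer q (e i) (e j) - negKer W (e i) (e j)) * ηh i * ηh j)
          ≤ h q := by
        calc (∑ i, ∑ j, (negKer q (e i) (e j) - negKer W (e i) (e j)) * ηh i * ηh j)
            ≤ ∑ i, ∑ j, |(negKer q (e i) (e j) - negKer W (e i) (e j)) * ηh i * ηh j| :=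
              Finset.sum_le_sum fun i _ => Finset.sum_le_sum fun j _ => le_abs_self _
          _ ≤ h q := by
              simp only [hh]
              refine Finset.sum_le_sum fun i _ => Finset.sum_le_sum fun j _ => ?_
              rw [abs_mul, abs_mul]
              have h1 := hsq_le ηh hηhS i
              have h2 := hsq_le ηh hηhS j
              have h3 : (0:ℝ) ≤ |negKer q (e i) (e j) - negKer W (e i) (e j)| := abs_nonneg _
              have t1 : |negKer q (e i) (e j) - negKer W (e i) (e j)| * |ηh i|
                  ≤ |negKer q (e i) (e j) - negKer W (e i) (e j)| * 1 :=
                mul_le_mul_of_nonneg_left h1 h3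
              have t2 : |negKer q (e i) (e j) - negKer W (e i) (e j)| * |ηh i| * |ηh j|
                  ≤ (|negKer q (e i) (e j) - negKer W (e i) (e j)| * 1) * 1 :=
                mul_le_mul t1 h2 (abs_nonneg _) (by simp [h3])
              calc |negKer q (e i) (e j) - negKer W (e i) (e j)| * |ηh i| * |ηh j|
                  ≤ (|negKer q (e i) (e j) - negKer W (e i) (e j)| * 1) * 1 := t2
                _ = |negKer q (e i) (e j) - negKer W (e i) (e j)| := by ring
      have hQqh : (∑ i, ∑ j, negKer q (e i) (e j) * ηh i * ηh j) ≤ 0 := by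
        rw [hd1]; linarith
      have hback : (∑ i, ∑ j, negKer q (e i) (e j) * η i * η j)
          = r ^ 2 * ∑ i, ∑ j, negKer q (e i) (e j) * ηh i * ηh j := by
        rw [← quad_smul (fun i j => negKer q (e i) (e j)) r ηh]
        refine Finset.sum_congr rfl fun i _ => Finset.sum_congr rfl fun j _ => ?_
        simp only [hηh, mul_inv_cancel_left₀ hrpos.ne']
      rw [hback]
      nlinarith [sq_nonneg r]
  have hle := le_csSup hbdd hqP
  rw [← hW] at hle
  rw [hq] at hle
  linarith

lemma half_sum {s : ℕ} (f : Fin s → Fin s → ℝ) (hsymm : ∀ i j, f i j = f j i) :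
    (∑ i, ∑ j, if i < j then f i j else 0)
      = (1/2) * ∑ i, ∑ j, if i ≠ j then f i j else 0 := by
  have h1 : ∀ i j : Fin s,
      (if i ≠ j then f i j else 0)
        = (if i < j then f i j else 0) + (if j < i then f i j else 0) := by
    intro i j
    rcases lt_trichotomy i j with h | h | h
    · rw [if_pos h.ne, if_pos h, if_neg (not_lt_of_gt h), add_zero]
    · subst h; simp
    · rw [if_pos h.ne', if_neg (not_lt_of_gt h), if_pos h, zero_add]
  have h2 : (∑ i, ∑ j, if i ≠ j then f i j else 0)
      = (∑ i, ∑ j, if i < j then f i j else 0)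
        + (∑ i, ∑ j, if j < i then f i j else 0) := by
    rw [← Finset.sum_add_distrib]
    refine Finset.sum_congr rfl fun i _ => ?_
    rw [← Finset.sum_add_distrib]
    exact Finset.sum_congr rfl fun j _ => h1 i j
  have h3 : (∑ i, ∑ j, if j < i then f i j else 0)
      = (∑ i, ∑ j, if i < j then f i j else 0) := by
    rw [Finset.sum_comm]
    exact Finset.sum_congr rfl fun i _ => Finset.sum_congr rfl fun j _ => by rw [hsymm]
  rw [h3] at h2
  linarith

lemma quad_split {N : ℕ} (K : Fin N → Fin N → ℝ) (hK : ∀ i j, K i j = K j i) (η : Fin N → ℝ) :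
    (∑ i, ∑ j, K i j * η i * η j)
      = (∑ i ∈ Finset.univ.filter (fun i => 0 < η i),
          ∑ j ∈ Finset.univ.filter (fun i => 0 < η i), K i j * η i * η j)
      + (∑ i ∈ Finset.univ.filter (fun i => η i < 0),
          ∑ j ∈ Finset.univ.filter (fun i => η i < 0), K i j * η i * η j)
      + 2 * (∑ i ∈ Finset.univ.filter (fun i => 0 < η i),
          ∑ j ∈ Finset.univ.filter (fun i => η i < 0), K i j * η i * η j) := by
  classical
  set A := Finset.univ.filter (fun i => 0 < η i) with hA
  set B := Finset.univ.filter (fun i => η i < 0) with hB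
  have hdisj : Disjoint A B := by
    rw [Finset.disjoint_left]
    intro i hiA hiB
    rw [hA, Finset.mem_filter] at hiA
    rw [hB, Finset.mem_filter] at hiB
    linarith [hiA.2, hiB.2]
  have hzero : ∀ i, i ∉ A ∪ B → η i = 0 := by
    intro i hi
    rw [Finset.mem_union, hA, hB, Finset.mem_filter, Finset.mem_filter] at hi
    push_neg at hi
    have h1 := hi.1 (Finset.mem_univ i)
    have h2 := hi.2 (Finset.mem_univ i)
    linarith
  have inner : ∀ i, (∑ j, K i j * η i * η j)
      = (∑ j ∈ A, K i j * η i * η j) + (∑ j ∈ B, K i j * η i * η j) := by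
    intro i
    rw [← Finset.sum_union hdisj]
    exact (Finset.sum_subset (Finset.subset_univ _)
      (fun j _ hj => by rw [hzero j hj]; ring)).symm
  have outer : (∑ i, ∑ j, K i j * η i * η j)
      = (∑ i ∈ A, ∑ j, K i j * η i * η j) + (∑ i ∈ B, ∑ j, K i j * η i * η j) := by
    rw [← Finset.sum_union hdisj]
    exact (Finset.sum_subset (Finset.subset_univ _) (fun i _ hi =>
      Finset.sum_eq_zero fun j _ => by rw [hzero i hi]; ring)).symm
  have hBA : (∑ i ∈ B, ∑ j ∈ A, K i j * η i * η j)
      = (∑ i ∈ A, ∑ j ∈ B, K i j * η i * η j) := by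
    rw [Finset.sum_comm]
    exact Finset.sum_congr rfl fun i _ => Finset.sum_congr rfl fun j _ => by rw [hK]; ring
  rw [outer, Finset.sum_congr rfl (fun i _ => inner i), Finset.sum_congr rfl (fun i _ => inner i),
    Finset.sum_add_distrib, Finset.sum_add_distrib, hBA]
  ring

lemma sum_equivFin {α : Type*} (A : Finset α) (g : α → ℝ) :
    (∑ j : Fin A.card, g ((A.equivFin.symm j : α))) = ∑ i ∈ A, g i := by
  rw [Equiv.sum_comp A.equivFin.symm (fun i : A => g i), Finset.sum_coe_sort]

lemma sum2_neg_mul {β : Type*} (S T : Finset β) (c : ℝ) (F : β → β → ℝ) :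
    (∑ u ∈ S, ∑ v ∈ T, -(c * F u v)) = -(c * ∑ u ∈ S, ∑ v ∈ T, F u v) := by
  rw [Finset.mul_sum, ← Finset.sum_neg_distrib]
  refine Finset.sum_congr rfl fun u _ => ?_
  rw [Finset.mul_sum, ← Finset.sum_neg_distrib]

lemma sum2_mul {β : Type*} (S T : Finset β) (c : ℝ) (F : β → β → ℝ) :
    (∑ u ∈ S, ∑ v ∈ T, c * F u v) = c * ∑ u ∈ S, ∑ v ∈ T, F u v := by
  rw [Finset.mul_sum]
  exact Finset.sum_congr rfl fun u _ => (Finset.mul_sum _ _ _).symm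

lemma build_simplex {N : ℕ} (e : Fin N ≃ X) (p : ℝ) (η : Fin N → ℝ)
    (hne : η ≠ 0) (hsum : (∑ i, η i) = 0)
    (hQ : (∑ i, ∑ j, negKer p (e i) (e j) * η i * η j) = 0) :
    ∃ (s t : ℕ) (a : Fin s → X) (b : Fin t → X) (m : Fin s → ℝ) (n : Fin t → ℝ),
      IsNormSimplex a b m n ∧ simplexGap p a b m n = 0 := by
  set A := Finset.univ.filter (fun i => 0 < η i) with hA
  set B := Finset.univ.filter (fun i => η i < 0) with hB
  have hdisj : Disjoint A B := by
    rw [Finset.disjoint_left]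
    intro i hiA hiB
    rw [hA, Finset.mem_filter] at hiA
    rw [hB, Finset.mem_filter] at hiB
    linarith [hiA.2, hiB.2]
  have hzero : ∀ i, i ∉ A ∪ B → η i = 0 := by
    intro i hi
    rw [Finset.mem_union, hA, hB, Finset.mem_filter, Finset.mem_filter] at hi
    push_neg at hi
    have h1 := hi.1 (Finset.mem_univ i)
    have h2 := hi.2 (Finset.mem_univ i)
    linarith
  have hAne : A.Nonempty := by
    by_contra hc
    apply hne
    funext i
    have hnonpos : ∀ j ∈ Finset.univ, η j ≤ 0 := by
      intro j _
      by_contra hpos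
      push_neg at hpos
      exact hc ⟨j, by rw [hA, Finset.mem_filter]; exact ⟨Finset.mem_univ j, hpos⟩⟩
    have := (Finset.sum_eq_zero_iff_of_nonpos hnonpos).mp hsum i (Finset.mem_univ i)
    simpa using this
  have hBne : B.Nonempty := by
    by_contra hc
    apply hne
    funext i
    have hnonneg : ∀ j ∈ Finset.univ, 0 ≤ η j := by
      intro j _
      by_contra hneg
      push_neg at hneg
      exact hc ⟨j, by rw [hB, Finset.mem_filter]; exact ⟨Finset.mem_univ j, hneg⟩⟩
    have := (Finset.sum_eq_zero_iff_of_nonneg hnonneg).mp hsum i (Finset.mem_univ i)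
    simpa using this
  set M := ∑ i ∈ A, η i with hM
  have hMpos : 0 < M :=
    Finset.sum_pos (fun i hi => (Finset.mem_filter.mp hi).2) hAne
  have hMB : (∑ i ∈ B, η i) = -M := by
    have h1 : (∑ i ∈ A ∪ B, η i) = ∑ i, η i :=
      Finset.sum_subset (Finset.subset_univ _) (fun i _ hi => hzero i hi)
    rw [Finset.sum_union hdisj, hsum] at h1
    rw [hM]
    linarith [h1]
  set φ : Fin A.card → Fin N := fun j => (A.equivFin.symm j : Fin N) with hφ
  set ψ : Fin B.card → Fin N := fun j => (B.equivFin.symm j : Fin N) with hψ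
  have hφA : ∀ j, φ j ∈ A := fun j => (A.equivFin.symm j).2
  have hψB : ∀ j, ψ j ∈ B := fun j => (B.equivFin.symm j).2
  have hφinj : Function.Injective φ :=
    fun a b hab => A.equivFin.symm.injective (Subtype.coe_injective hab)
  have hψinj : Function.Injective ψ :=
    fun a b hab => B.equivFin.symm.injective (Subtype.coe_injective hab)
  have reidxA : ∀ g : Fin N → ℝ, (∑ j, g (φ j)) = ∑ i ∈ A, g i := by
    intro g
    simp only [hφ]
    exact sum_equivFin A g
  have reidxB : ∀ g : Fin N → ℝ, (∑ j, g (ψ j)) = ∑ i ∈ B, g i := by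
    intro g
    simp only [hψ]
    exact sum_equivFin B g
  have hηφpos : ∀ j, 0 < η (φ j) := fun j => (Finset.mem_filter.mp (hφA j)).2
  have hηψneg : ∀ j, η (ψ j) < 0 := fun j => (Finset.mem_filter.mp (hψB j)).2
  refine ⟨A.card, B.card, fun j => e (φ j), fun i => e (ψ i),
    fun j => η (φ j) / M, fun i => -η (ψ i) / M, ?_, ?_⟩
  · refine ⟨?_, ?_, ?_, ?_, ?_, ?_, ?_⟩
    · exact fun a b hab => hφinj (e.injective hab)
    · exact fun a b hab => hψinj (e.injective hab)
    · intro j i hji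
      have heq := e.injective hji
      have h1 := hηφpos j
      have h2 := hηψneg i
      rw [heq] at h1
      linarith
    · exact fun j => div_pos (hηφpos j) hMpos
    · exact fun i => div_pos (neg_pos.mpr (hηψneg i)) hMpos
    · calc (∑ j, η (φ j) / M) = ∑ i ∈ A, η i / M := reidxA (fun u => η u / M)
        _ = (∑ i ∈ A, η i) / M := by rw [← Finset.sum_div]
        _ = 1 := by rw [← hM]; exact div_self hMpos.ne'
    · calc (∑ i, -η (ψ i) / M) = ∑ v ∈ B, -η v / M := reidxB (fun u => -η u / M)
        _ = (∑ v ∈ B, -η v) / M := by rw [← Finset.sum_div]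
        _ = 1 := by rw [Finset.sum_neg_distrib, hMB, neg_neg]; exact div_self hMpos.ne'
  · have hsplit := quad_split (fun i j => negKer p (e i) (e j))
      (fun i j => negKer_comm p (e i) (e j)) η
    rw [hQ, ← hA, ← hB] at hsplit
    show (∑ j, ∑ i, (η (φ j) / M) * (-η (ψ i) / M) * dist (e (φ j)) (e (ψ i)) ^ p)
        - (∑ j₁, ∑ j₂, if j₁ < j₂ then
            (η (φ j₁) / M) * (η (φ j₂) / M) * dist (e (φ j₁)) (e (φ j₂)) ^ p else 0)
        - (∑ i₁, ∑ i₂, if i₁ < i₂ then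
            (-η (ψ i₁) / M) * (-η (ψ i₂) / M) * dist (e (ψ i₁)) (e (ψ i₂)) ^ p else 0) = 0
    have hT1 : (∑ j, ∑ i, (η (φ j) / M) * (-η (ψ i) / M) * dist (e (φ j)) (e (ψ i)) ^ p)
        = -((M^2)⁻¹ * ∑ u ∈ A, ∑ v ∈ B, negKer p (e u) (e v) * η u * η v) := by
      calc (∑ j, ∑ i, (η (φ j) / M) * (-η (ψ i) / M) * dist (e (φ j)) (e (ψ i)) ^ p)
          = ∑ u ∈ A, ∑ i, (η u / M) * (-η (ψ i) / M) * dist (e u) (e (ψ i)) ^ p :=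
            reidxA (fun u => ∑ i, (η u / M) * (-η (ψ i) / M) * dist (e u) (e (ψ i)) ^ p)
        _ = ∑ u ∈ A, ∑ v ∈ B, (η u / M) * (-η v / M) * dist (e u) (e v) ^ p :=
            Finset.sum_congr rfl fun u _ =>
              reidxB (fun v => (η u / M) * (-η v / M) * dist (e u) (e v) ^ p)
        _ = ∑ u ∈ A, ∑ v ∈ B, -((M^2)⁻¹ * (negKer p (e u) (e v) * η u * η v)) := by
            refine Finset.sum_congr rfl fun u hu => Finset.sum_congr rfl fun v hv => ?_
            have huv : u ≠ v := by
              intro hc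
              have h1 := (Finset.mem_filter.mp hu).2
              have h2 := (Finset.mem_filter.mp hv).2
              rw [hc] at h1
              linarith
            rw [negKer_of_ne (fun hc => huv (e.injective hc))]
            ring
        _ = -((M^2)⁻¹ * ∑ u ∈ A, ∑ v ∈ B, negKer p (e u) (e v) * η u * η v) :=
            sum2_neg_mul A B _ _
    have hT2 : (∑ j₁, ∑ j₂, if j₁ < j₂ then
            (η (φ j₁) / M) * (η (φ j₂) / M) * dist (e (φ j₁)) (e (φ j₂)) ^ p else 0)
        = (1/2) * ((M^2)⁻¹ * ∑ u ∈ A, ∑ v ∈ A, negKer p (e u) (e v) * η u * η v) := by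
      rw [half_sum (fun j₁ j₂ => (η (φ j₁) / M) * (η (φ j₂) / M)
        * dist (e (φ j₁)) (e (φ j₂)) ^ p) (fun i j => by beta_reduce; rw [dist_comm]; ring)]
      congr 1
      calc (∑ j₁, ∑ j₂, if j₁ ≠ j₂ then
              (η (φ j₁) / M) * (η (φ j₂) / M) * dist (e (φ j₁)) (e (φ j₂)) ^ p else 0)
          = ∑ j₁, ∑ j₂, (M^2)⁻¹ * (negKer p (e (φ j₁)) (e (φ j₂)) * η (φ j₁) * η (φ j₂)) := by
            refine Finset.sum_congr rfl fun j₁ _ => Finset.sum_congr rfl fun j₂ _ => ?_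
            by_cases hj : j₁ = j₂
            · subst hj
              rw [if_neg (not_not_intro rfl), negKer_self]
              ring
            · have hnee : e (φ j₁) ≠ e (φ j₂) := fun hc => hj (hφinj (e.injective hc))
              rw [if_pos hj, negKer_of_ne hnee]
              ring
        _ = ∑ u ∈ A, ∑ j₂, (M^2)⁻¹ * (negKer p (e u) (e (φ j₂)) * η u * η (φ j₂)) :=
            reidxA (fun u => ∑ j₂, (M^2)⁻¹ * (negKer p (e u) (e (φ j₂)) * η u * η (φ j₂)))
        _ = ∑ u ∈ A, ∑ v ∈ A, (M^2)⁻¹ * (negKer p (e u) (e v) * η u * η v) :=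
            Finset.sum_congr rfl fun u _ =>
              reidxA (fun v => (M^2)⁻¹ * (negKer p (e u) (e v) * η u * η v))
        _ = (M^2)⁻¹ * ∑ u ∈ A, ∑ v ∈ A, negKer p (e u) (e v) * η u * η v :=
            sum2_mul A A _ _
    have hT3 : (∑ i₁, ∑ i₂, if i₁ < i₂ then
            (-η (ψ i₁) / M) * (-η (ψ i₂) / M) * dist (e (ψ i₁)) (e (ψ i₂)) ^ p else 0)
        = (1/2) * ((M^2)⁻¹ * ∑ u ∈ B, ∑ v ∈ B, negKer p (e u) (e v) * η u * η v) := by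
      rw [half_sum (fun i₁ i₂ => (-η (ψ i₁) / M) * (-η (ψ i₂) / M)
        * dist (e (ψ i₁)) (e (ψ i₂)) ^ p) (fun i j => by beta_reduce; rw [dist_comm]; ring)]
      congr 1
      calc (∑ i₁, ∑ i₂, if i₁ ≠ i₂ then
              (-η (ψ i₁) / M) * (-η (ψ i₂) / M) * dist (e (ψ i₁)) (e (ψ i₂)) ^ p else 0)
          = ∑ i₁, ∑ i₂, (M^2)⁻¹ * (negKer p (e (ψ i₁)) (e (ψ i₂)) * η (ψ i₁) * η (ψ i₂)) := by
            refine Finset.sum_congr rfl fun i₁ _ => Finset.sum_congr rfl fun i₂ _ => ?_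
            by_cases hj : i₁ = i₂
            · subst hj
              rw [if_neg (not_not_intro rfl), negKer_self]
              ring
            · have hnee : e (ψ i₁) ≠ e (ψ i₂) := fun hc => hj (hψinj (e.injective hc))
              rw [if_pos hj, negKer_of_ne hnee]
              ring
        _ = ∑ u ∈ B, ∑ i₂, (M^2)⁻¹ * (negKer p (e u) (e (ψ i₂)) * η u * η (ψ i₂)) :=
            reidxB (fun u => ∑ i₂, (M^2)⁻¹ * (negKer p (e u) (e (ψ i₂)) * η u * η (ψ i₂)))
        _ = ∑ u ∈ B, ∑ v ∈ B, (M^2)⁻¹ * (negKer p (e u) (e v) * η u * η v) :=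
            Finset.sum_congr rfl fun u _ =>
              reidxB (fun v => (M^2)⁻¹ * (negKer p (e u) (e v) * η u * η v))
        _ = (M^2)⁻¹ * ∑ u ∈ B, ∑ v ∈ B, negKer p (e u) (e v) * η u * η v :=
            sum2_mul B B _ _
    rw [hT1, hT2, hT3]
    linear_combination ((1/2) * (M^2)⁻¹) * hsplit

end AuxNegType

/-- If the supremal `p`-negative type `℘` of a finite metric space is finite,
then some normalized `(s,t)`-simplex has `γ_D^℘(ω) = 0`, i.e. equality holds
in the generalized roundness inequality with exponent `℘`. -/


theorem exists_simplexGap_zero_at_sup {X : Type*} [MetricSpace X] [Fintype X]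
    (hbdd : BddAbove {p : ℝ | 0 ≤ p ∧ HasNegType X p}) :
    ∃ (s t : ℕ) (a : Fin s → X) (b : Fin t → X) (m : Fin s → ℝ) (n : Fin t → ℝ),
      IsNormSimplex a b m n ∧
      simplexGap (sSup {p : ℝ | 0 ≤ p ∧ HasNegType X p}) a b m n = 0 := by
  classical
  have hN : 2 ≤ Fintype.card X := by
    by_contra hc
    push_neg at hc
    have hall : ∀ p : ℝ, HasNegType X p := by
      intro p k hk x hx η hη
      have hle : k ≤ Fintype.card X := by
        simpa using Fintype.card_le_of_injective x hx
      omega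
    obtain ⟨C, hC⟩ := hbdd
    have h0 : (0:ℝ) ∈ {p : ℝ | 0 ≤ p ∧ HasNegType X p} := ⟨le_refl 0, hasNegType_zero⟩
    have hC0 : (0:ℝ) ≤ C := hC h0
    have hmem : C + 1 ∈ {p : ℝ | 0 ≤ p ∧ HasNegType X p} := ⟨by linarith, hall _⟩
    have := hC hmem
    linarith
  obtain ⟨η, hne, hsum, hQ⟩ := exists_null hN (Fintype.equivFin X).symm hbdd
  exact build_simplex (Fintype.equivFin X).symm _ η hne hsum hQ
end

section
/- Every finite tree endowed with the ordinary path metric has strict q-negative type for all q in some interval [1, 1+ζ) with ζ > 0; that is, if T is a finite tree with the ordinary path metric d, then there exists ζ > 0 such that (T,d) has strict q-negative type for every q ∈ [1, 1+ζ). -/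
open scoped BigOperators

section TreeNegAux

open Finset SimpleGraph

variable {V : Type*} {G : SimpleGraph V}

lemma path_length_eq_dist (ht : G.IsTree) {u v : V} (p : G.Walk u v) (hp : p.IsPath) :
    p.length = G.dist u v := by
  obtain ⟨q, hq, hql⟩ := ht.isConnected.exists_path_of_dist u v
  rw [(ht.existsUnique_path u v).unique hp hq, hql]

lemma tree_gate (ht : G.IsTree) (S : Finset V) (hS : 2 ≤ S.card) :
    ∃ ℓ ∈ S, ∃ b : V, G.Adj ℓ b ∧ ∀ x ∈ S, x ≠ ℓ → G.dist ℓ x = 1 + G.dist b x := by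
  classical
  obtain ⟨a, ha, c, hc, hac⟩ := Finset.one_lt_card.mp hS
  obtain ⟨⟨ℓ, v⟩, hmem, hmax⟩ := (S ×ˢ S).exists_max_image (fun p => G.dist p.1 p.2)
    ⟨(a, c), Finset.mem_product.mpr ⟨ha, hc⟩⟩
  rw [Finset.mem_product] at hmem
  obtain ⟨hℓS, hvS⟩ := hmem
  have hac1 : 1 ≤ G.dist a c := ht.isConnected.pos_dist_of_ne hac
  have hD1 : 1 ≤ G.dist ℓ v := le_trans hac1 (hmax (a, c) (Finset.mem_product.mpr ⟨ha, hc⟩))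
  obtain ⟨p, hp, hpl⟩ := ht.isConnected.exists_path_of_dist ℓ v
  cases p with
  | nil => simp [SimpleGraph.dist_self] at hD1
  | @cons _ b _ h q =>
    refine ⟨ℓ, hℓS, b, h, ?_⟩
    intro x hxS hxℓ
    obtain ⟨r, hr, hrl⟩ := ht.isConnected.exists_path_of_dist ℓ x
    cases r with
    | nil => exact absurd rfl hxℓ.symm
    | @cons _ b' _ h' r' =>
      have hr' : r'.IsPath ∧ ℓ ∉ r'.support := by
        rw [SimpleGraph.Walk.cons_isPath_iff] at hr; exact hr
      have hrlen : G.dist ℓ x = r'.length + 1 := by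
        simp [SimpleGraph.Walk.length_cons] at hrl; omega
      have hr'dist : r'.length = G.dist b' x := path_length_eq_dist ht r' hr'.1
      suffices hbb : b' = b by
        subst hbb; rw [hrlen, hr'dist]; omega
      -- unique path from x to v
      obtain ⟨w, hw, hwl⟩ := ht.isConnected.exists_path_of_dist x v
      by_cases hl : ℓ ∈ w.support
      · exfalso
        have htake := hw.takeUntil hl
        have hdrop := hw.dropUntil hl
        have hsplit : (w.takeUntil ℓ hl).length + (w.dropUntil ℓ hl).length = w.length := by
          have := congrArg SimpleGraph.Walk.length (w.take_spec hl)
          rwa [SimpleGraph.Walk.length_append] at this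
        have h1 : (w.takeUntil ℓ hl).length = G.dist x ℓ := path_length_eq_dist ht _ htake
        have h2 : (w.dropUntil ℓ hl).length = G.dist ℓ v := path_length_eq_dist ht _ hdrop
        have hxv : w.length = G.dist x v := hwl
        have hxvle : G.dist x v ≤ G.dist ℓ v := hmax (x, v) (Finset.mem_product.mpr ⟨hxS, hvS⟩)
        have hxl1 : 1 ≤ G.dist x ℓ := ht.isConnected.pos_dist_of_ne hxℓ
        omega
      · have hbsupp : ℓ ∉ (r'.append w).bypass.support := by
          intro hmem
          have := SimpleGraph.Walk.support_bypass_subset _ hmem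
          rw [SimpleGraph.Walk.mem_support_append_iff] at this
          exact this.elim (fun h => hr'.2 h) (fun h => hl h)
        have hP : (SimpleGraph.Walk.cons h' ((r'.append w).bypass)).IsPath := by
          rw [SimpleGraph.Walk.cons_isPath_iff]
          exact ⟨SimpleGraph.Walk.bypass_isPath _, hbsupp⟩
        have heq := (ht.existsUnique_path ℓ v).unique hP hp
        have := congrArg (fun z => z.getVert 1) heq
        simpa [SimpleGraph.Walk.getVert_cons_succ] using this


section Core
variable [Fintype V]

lemma eta_small (S : Finset V) (η : V → ℝ) (hcard : S.card ≤ 1)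
    (hsupp : ∀ v, v ∉ S → η v = 0) (hsum : (∑ v, η v) = 0) : ∀ v, η v = 0 := by
  classical
  interval_cases h : S.card
  · have hS : S = ∅ := Finset.card_eq_zero.mp h
    intro v; exact hsupp v (by simp [hS])
  · obtain ⟨s, hs⟩ := Finset.card_eq_one.mp h
    have hηs : η s = 0 := by
      have : (∑ v, η v) = η s := by
        refine Finset.sum_eq_single s (fun b _ hb => hsupp b (by simp [hs, hb])) (by simp)
      rw [this] at hsum; exact hsum
    intro v
    by_cases hv : v = s
    · rw [hv]; exact hηs
    · exact hsupp v (by simp [hs, hv])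

lemma measure_insert [DecidableEq V] (a : V) (E : Finset V) (ha : a ∉ E) :
    (∑ u ∈ insert a E, ∑ v ∈ insert a E, G.dist u v)
      = (∑ u ∈ E, ∑ v ∈ E, G.dist u v) + 2 * ∑ v ∈ E, G.dist a v := by
  classical
  rw [Finset.sum_insert ha, Finset.sum_insert ha]
  have h1 : ∑ u ∈ E, ∑ v ∈ insert a E, G.dist u v
      = (∑ u ∈ E, G.dist u a) + ∑ u ∈ E, ∑ v ∈ E, G.dist u v := by
    rw [← Finset.sum_add_distrib]
    exact Finset.sum_congr rfl (fun u _ => by rw [Finset.sum_insert ha])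
  have h2 : ∑ u ∈ E, G.dist u a = ∑ u ∈ E, G.dist a u :=
    Finset.sum_congr rfl (fun u _ => SimpleGraph.dist_comm)
  rw [h1, h2, SimpleGraph.dist_self]
  ring

lemma core (ht : G.IsTree) :
    ∀ (N : ℕ) (S : Finset V) (η : V → ℝ),
      (∑ u ∈ S, ∑ v ∈ S, G.dist u v) ≤ N →
      (∀ v, v ∉ S → η v = 0) → (∑ v, η v) = 0 →
      (∑ u, ∑ v, ((G.dist u v : ℕ) : ℝ) * η u * η v) ≤ -((1/2 : ℝ)^N) * ∑ v, (η v)^2 := by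
  classical
  intro N
  induction N with
  | zero =>
    intro S η hm hsupp hsum
    have hcard : S.card ≤ 1 := by
      by_contra hc
      obtain ⟨a, ha, c, hc', hac⟩ := Finset.one_lt_card.mp (show 1 < S.card by omega)
      have h1 : 1 ≤ G.dist a c := ht.isConnected.pos_dist_of_ne hac
      have h2 : G.dist a c ≤ ∑ v ∈ S, G.dist a v :=
        Finset.single_le_sum (fun v _ => Nat.zero_le _) hc'
      have h3 : (∑ v ∈ S, G.dist a v) ≤ ∑ u ∈ S, ∑ v ∈ S, G.dist u v :=
        Finset.single_le_sum (f := fun u => ∑ v ∈ S, G.dist u v)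
          (fun u _ => Nat.zero_le _) ha
      omega
    have hz := eta_small S η hcard hsupp hsum
    simp [hz]
  | succ N IH =>
    intro S η hm hsupp hsum
    by_cases hcard : S.card ≤ 1
    · have hz := eta_small S η hcard hsupp hsum
      simp [hz]
    · push_neg at hcard
      obtain ⟨ℓ, hℓS, b, hadj, hgate⟩ := tree_gate ht S (by omega)
      have hbℓ : b ≠ ℓ := fun h => G.irrefl (h ▸ hadj)
      have hdℓb : G.dist ℓ b = 1 := SimpleGraph.dist_eq_one_iff_adj.mpr hadj
      set dR : V → V → ℝ := fun u v => ((G.dist u v : ℕ) : ℝ) with hdR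
      have hcomm : ∀ a c : V, dR a c = dR c a := fun a c => by
        simp [hdR, SimpleGraph.dist_comm]
      have hdRℓb : dR ℓ b = 1 := by simp [hdR, hdℓb]
      have hdRbℓ : dR b ℓ = 1 := by rw [hcomm]; exact hdRℓb
      have hdRℓℓ : dR ℓ ℓ = 0 := by simp [hdR]
      have hdRbb : dR b b = 0 := by simp [hdR]
      set δ : V → ℝ := fun v => (if v = b then η ℓ else 0) - (if v = ℓ then η ℓ else 0) with hδ
      set η' : V → ℝ := fun v => η v + δ v with hη'
      -- helper: sums against δ
      have sumδ : ∀ g : V → ℝ, (∑ v, g v * δ v) = (g b - g ℓ) * η ℓ := by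
        intro g
        have : ∀ v, g v * δ v
            = (if v = b then g v * η ℓ else 0) - (if v = ℓ then g v * η ℓ else 0) := by
          intro v
          by_cases h1 : v = b
          · subst h1; simp [hδ, hbℓ]
          · by_cases h2 : v = ℓ
            · subst h2; simp [hδ, Ne.symm hbℓ]
            · simp [hδ, h1, h2]
        rw [Finset.sum_congr rfl (fun v _ => this v), Finset.sum_sub_distrib,
          Finset.sum_ite_eq' Finset.univ b (fun v => g v * η ℓ),
          Finset.sum_ite_eq' Finset.univ ℓ (fun v => g v * η ℓ)]
        simp; ring
      -- key: ∑ η u * (dR u b - dR u ℓ) = 2 η ℓ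
      have sum1 : (∑ u, η u * (dR u b - dR u ℓ)) = 2 * η ℓ := by
        have hpt : ∀ u, η u * (dR u b - dR u ℓ)
            = -(η u) + (if u = ℓ then 2 * η u else 0) := by
          intro u
          by_cases h : u = ℓ
          · subst h; rw [if_pos rfl, hdRℓb, hdRℓℓ]; ring
          · simp only [if_neg h]
            by_cases hu : u ∈ S
            · have := hgate u hu h
              have hval : dR u ℓ = 1 + dR u b := by
                rw [hcomm u ℓ, hcomm u b]; simp [hdR, this]
              rw [hval]; ring
            · rw [hsupp u hu]; ring
        rw [Finset.sum_congr rfl (fun u _ => hpt u), Finset.sum_add_distrib]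
        rw [Finset.sum_ite_eq' Finset.univ ℓ (fun u => 2 * η u)]
        simp [hsum]
      have sumδ' : ∀ g : V → ℝ, (∑ v, δ v * g v) = (g b - g ℓ) * η ℓ := by
        intro g
        rw [← sumδ g]
        exact Finset.sum_congr rfl (fun v _ => by ring)
      -- the quadratic identity
      have hquad : (∑ u, ∑ v, dR u v * η' u * η' v)
          = (∑ u, ∑ v, dR u v * η u * η v) + 2 * (η ℓ)^2 := by
        have expand : ∀ u, (∑ v, dR u v * η' u * η' v)
            = (∑ v, dR u v * η u * η v) + (η u * ((dR u b - dR u ℓ) * η ℓ))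
              + ((∑ v, dR u v * η v) * δ u) + (δ u * ((dR u b - dR u ℓ) * η ℓ)) := by
          intro u
          have e1 : ∀ v, dR u v * η' u * η' v
              = dR u v * η u * η v + (dR u v * δ v) * η u
                + (dR u v * η v) * δ u + (dR u v * δ v) * δ u := by
            intro v; simp only [hη']; ring
          rw [Finset.sum_congr rfl (fun v _ => e1 v)]
          rw [Finset.sum_add_distrib, Finset.sum_add_distrib, Finset.sum_add_distrib]
          rw [← Finset.sum_mul, ← Finset.sum_mul, ← Finset.sum_mul]
          rw [sumδ (fun v => dR u v)]
          ring
        rw [Finset.sum_congr rfl (fun u _ => expand u)]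
        rw [Finset.sum_add_distrib, Finset.sum_add_distrib, Finset.sum_add_distrib]
        have t2 : (∑ u, η u * ((dR u b - dR u ℓ) * η ℓ)) = 2 * (η ℓ)^2 := by
          have : ∀ u, η u * ((dR u b - dR u ℓ) * η ℓ)
              = (η u * (dR u b - dR u ℓ)) * η ℓ := fun u => by ring
          rw [Finset.sum_congr rfl (fun u _ => this u), ← Finset.sum_mul, sum1]; ring
        have t3 : (∑ u, (∑ v, dR u v * η v) * δ u) = 2 * (η ℓ)^2 := by
          rw [sumδ (fun u => ∑ v, dR u v * η v)]
          have hb' : (∑ v, dR b v * η v) = ∑ v, η v * (dR v b) :=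
            Finset.sum_congr rfl (fun v _ => by rw [hcomm b v]; ring)
          have hℓ' : (∑ v, dR ℓ v * η v) = ∑ v, η v * (dR v ℓ) :=
            Finset.sum_congr rfl (fun v _ => by rw [hcomm ℓ v]; ring)
          rw [hb', hℓ', ← Finset.sum_sub_distrib]
          have : ∀ v, η v * dR v b - η v * dR v ℓ = η v * (dR v b - dR v ℓ) :=
            fun v => by ring
          rw [Finset.sum_congr rfl (fun v _ => this v), sum1]; ring
        have t4 : (∑ u, δ u * ((dR u b - dR u ℓ) * η ℓ)) = -(2 * (η ℓ)^2) := by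
          rw [sumδ' (fun u => (dR u b - dR u ℓ) * η ℓ)]
          rw [hdRbb, hdRbℓ, hdRℓb, hdRℓℓ]; ring
        rw [t2, t3, t4]; ring
      -- sums of squares
      have hsq : (∑ v, (η' v)^2) = (∑ v, (η v)^2) + 2 * η b * η ℓ := by
        have e1 : ∀ v, (η' v)^2 = (η v)^2 + 2 * (η v * δ v) + δ v * δ v := by
          intro v; simp only [hη']; ring
        rw [Finset.sum_congr rfl (fun v _ => e1 v), Finset.sum_add_distrib,
          Finset.sum_add_distrib, ← Finset.mul_sum, sumδ η, sumδ' δ]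
        have hδb : δ b = η ℓ := by simp [hδ, hbℓ]
        have hδℓ : δ ℓ = -(η ℓ) := by simp [hδ, hbℓ, Ne.symm hbℓ]
        rw [hδb, hδℓ]; ring
      -- new support set
      set S' : Finset V := insert b (S.erase ℓ) with hS'
      have hsupp' : ∀ v, v ∉ S' → η' v = 0 := by
        intro v hv
        simp only [hS', Finset.mem_insert, Finset.mem_erase] at hv
        push_neg at hv
        obtain ⟨hvb, hv2⟩ := hv
        by_cases hvℓ : v = ℓ
        · subst hvℓ; simp [hη', hδ, hvb]
        · have : v ∉ S := fun hvS => hvℓ (by by_contra h; exact (hv2 h hvS).elim)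
          simp [hη', hδ, hvb, hvℓ, hsupp v this]
      have hsum' : (∑ v, η' v) = 0 := by
        have hδ0 : (∑ v, δ v) = 0 := by simpa using sumδ (fun _ => (1:ℝ))
        simp only [hη']
        rw [Finset.sum_add_distrib, hsum, hδ0]
        ring
      -- measure decrease
      have hmeas' : (∑ u ∈ S', ∑ v ∈ S', G.dist u v) ≤ N := by
        set E := S.erase ℓ with hE
        have hℓE : ℓ ∉ E := Finset.notMem_erase _ _
        have hSE : S = insert ℓ E := (Finset.insert_erase hℓS).symm
        have hmS : (∑ u ∈ S, ∑ v ∈ S, G.dist u v)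
            = (∑ u ∈ E, ∑ v ∈ E, G.dist u v) + 2 * ∑ v ∈ E, G.dist ℓ v := by
          rw [hSE]; exact measure_insert ℓ E hℓE
        have hEcard : 1 ≤ E.card := by
          rw [hE, Finset.card_erase_of_mem hℓS]
          omega
        obtain ⟨e0, he0⟩ := Finset.card_pos.mp (by omega : 0 < E.card)
        have hgateE : ∀ v ∈ E, G.dist ℓ v = 1 + G.dist b v := by
          intro v hv
          exact hgate v (Finset.mem_of_mem_erase hv) (Finset.ne_of_mem_erase hv)
        have hsumE : (∑ v ∈ E, G.dist ℓ v) = E.card + ∑ v ∈ E, G.dist b v := by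
          rw [Finset.sum_congr rfl hgateE, Finset.sum_add_distrib]
          simp
        by_cases hbE : b ∈ E
        · have hS'E : S' = E := by rw [hS']; exact Finset.insert_eq_self.mpr hbE
          have h1 : 1 ≤ ∑ v ∈ E, G.dist ℓ v := by
            have : G.dist ℓ b ≤ ∑ v ∈ E, G.dist ℓ v :=
              Finset.single_le_sum (fun v _ => Nat.zero_le _) hbE
            omega
          rw [hS'E]; omega
        · have hmS' : (∑ u ∈ S', ∑ v ∈ S', G.dist u v)
              = (∑ u ∈ E, ∑ v ∈ E, G.dist u v) + 2 * ∑ v ∈ E, G.dist b v :=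
            measure_insert b E hbE
          omega
      -- apply IH
      have hIH := IH S' η' hmeas' hsupp' hsum'
      rw [hsq] at hIH
      -- conclude
      have hgoal : (∑ u, ∑ v, dR u v * η u * η v)
          = (∑ u, ∑ v, dR u v * η' u * η' v) - 2 * (η ℓ)^2 := by rw [hquad]; ring
      rw [hgoal]
      have hc1 : (0:ℝ) < (1/2 : ℝ)^N := by positivity
      have hc2 : ((1:ℝ)/2)^N ≤ 1 := pow_le_one₀ (by norm_num) (by norm_num)
      have hA : (η b)^2 + (η ℓ)^2 ≤ ∑ v, (η v)^2 := by
        have hsub : ({b, ℓ} : Finset V) ⊆ Finset.univ := Finset.subset_univ _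
        have := Finset.sum_le_sum_of_subset_of_nonneg hsub
          (fun v _ _ => sq_nonneg (η v))
        rwa [Finset.sum_pair hbℓ] at this
      have hpow : ((1:ℝ)/2)^(N+1) = (1/2) * (1/2)^N := by rw [pow_succ]; ring
      rw [hpow]
      nlinarith [sq_nonneg (η b + 2 * η ℓ), sq_nonneg (η ℓ), sq_nonneg (η b),
        mul_nonneg hc1.le (sq_nonneg (η b + 2 * η ℓ))]

end Core

end TreeNegAux

/-- Every finite tree with the ordinary path metric has strict `q`-negative
type for all `q` in some interval `[1, 1+ζ)` with `ζ > 0`. -/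
theorem tree_strictNegType_interval {V : Type*} [Fintype V] [MetricSpace V]
    (G : SimpleGraph V) (htree : G.IsTree)
    (hdist : ∀ u v : V, dist u v = (G.dist u v : ℝ)) :
    ∃ ζ : ℝ, 0 < ζ ∧ ∀ q : ℝ, 1 ≤ q → q < 1 + ζ → HasStrictNegType V q := by
  classical
  by_cases hsub : ∀ a b : V, a = b
  · refine ⟨1, one_pos, fun q _ _ => ⟨?_, ?_⟩⟩
    · intro k hk x hinj η _
      exfalso
      have h01 : (⟨0, by omega⟩ : Fin k) ≠ (⟨1, by omega⟩ : Fin k) := by simp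
      exact h01 (hinj (hsub _ _))
    · intro k hk x hinj η _ _
      exfalso
      have h01 : (⟨0, by omega⟩ : Fin k) ≠ (⟨1, by omega⟩ : Fin k) := by simp
      exact h01 (hinj (hsub _ _))
  · push_neg at hsub
    obtain ⟨a0, b0, hab⟩ := hsub
    have hconn := htree.isConnected
    have hnt : Nontrivial V := ⟨a0, b0, hab⟩
    set n : ℕ := Fintype.card V with hn
    have hn2 : 2 ≤ n := Fintype.one_lt_card
    have hnR : (0:ℝ) < (n:ℝ) := by exact_mod_cast (by omega : 0 < n)
    set m : ℕ := ∑ u, ∑ v, G.dist u v with hm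
    set c : ℝ := (1/2 : ℝ)^m with hc
    have hcpos : 0 < c := by positivity
    have hcle1 : c ≤ 1 := pow_le_one₀ (by norm_num) (by norm_num)
    have hQ1 : ∀ η : V → ℝ, (∑ v, η v) = 0 →
        (∑ u, ∑ v, ((G.dist u v : ℕ) : ℝ) * η u * η v) ≤ -c * ∑ v, (η v)^2 := by
      intro η hη
      exact core htree m Finset.univ η le_rfl (fun v hv => absurd (Finset.mem_univ v) hv) hη
    set D : ℝ := (n : ℝ) with hD
    have hD1 : (1:ℝ) ≤ D := by
      rw [hD]; exact_mod_cast (by omega : 1 ≤ n)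
    have hdistle : ∀ u v : V, ((G.dist u v : ℕ) : ℝ) ≤ D := by
      intro u v
      obtain ⟨p, hp, hl⟩ := hconn.exists_path_of_dist u v
      have h1 : G.dist u v < n := by rw [← hl]; exact hp.length_lt
      rw [hD]; exact_mod_cast h1.le
    set ε : ℝ := c / (2 * (n:ℝ)) with hε
    have hεpos : 0 < ε := div_pos hcpos (by linarith)
    have hcont : ContinuousAt (fun q : ℝ => D ^ q) 1 :=
      Real.continuousAt_const_rpow (by linarith : D ≠ 0)
    obtain ⟨ζ, hζpos, hζ⟩ := Metric.continuousAt_iff.mp hcont ε hεpos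
    refine ⟨ζ, hζpos, ?_⟩
    intro q hq1 hq2
    have hq0 : (0:ℝ) ≤ q - 1 := by linarith
    have hDqD : D ≤ D ^ q := by
      calc D = D^(1:ℝ) := (Real.rpow_one D).symm
        _ ≤ D^q := Real.rpow_le_rpow_of_exponent_le hD1 hq1
    have hDq : D ^ q - D < ε := by
      have hd : dist q 1 < ζ := by
        rw [Real.dist_eq, abs_of_nonneg hq0]; linarith
      have := hζ hd
      rw [Real.dist_eq, Real.rpow_one] at this
      have h2 := le_abs_self (D^q - D)
      linarith
    set E : ℝ := D ^ q - D with hEdef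
    have hE0 : (0:ℝ) ≤ E := by rw [hEdef]; linarith
    -- pointwise kernel bound
    have hterm : ∀ (u v : V) (s t : ℝ),
        negKer q u v * s * t ≤ ((G.dist u v : ℕ) : ℝ) * s * t + E * |s| * |t| := by
      intro u v s t
      by_cases huv : u = v
      · subst huv
        have h1 : negKer q u u = 0 := by simp [negKer]
        have h2 : ((G.dist u u : ℕ) : ℝ) = 0 := by simp
        rw [h1, h2]
        have : (0:ℝ) ≤ E * |s| * |t| := by positivity
        linarith
      · have h1 : (1:ℝ) ≤ ((G.dist u v : ℕ) : ℝ) := by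
          exact_mod_cast hconn.pos_dist_of_ne huv
        set t0 : ℝ := ((G.dist u v : ℕ) : ℝ) with ht0
        have hK : negKer q u v = t0 ^ q := by
          simp [negKer, huv, hdist u v, ht0]
        have h2 : t0 ≤ t0 ^ q := by
          calc t0 = t0^(1:ℝ) := (Real.rpow_one _).symm
            _ ≤ t0^q := Real.rpow_le_rpow_of_exponent_le h1 hq1
        have hsplit : ∀ x : ℝ, 0 < x → x ^ q = x * x^(q-1) := by
          intro x hx
          have h := Real.rpow_add hx 1 (q-1)
          rw [Real.rpow_one] at h
          rw [show (1:ℝ) + (q-1) = q from by ring] at h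
          exact h
        have h3 : t0 ^ q ≤ t0 + E := by
          have ha : t0 ^ q = t0 * t0^(q-1) := hsplit t0 (by linarith)
          have hb : t0^(q-1) ≤ D^(q-1) :=
            Real.rpow_le_rpow (by linarith) (hdistle u v) hq0
          have hc1 : (1:ℝ) ≤ t0^(q-1) := by
            calc (1:ℝ) = t0^(0:ℝ) := (Real.rpow_zero _).symm
              _ ≤ t0^(q-1) := Real.rpow_le_rpow_of_exponent_le h1 hq0
          have hd2 : D * D^(q-1) = D^q := (hsplit D (by linarith)).symm
          have htD := hdistle u v
          rw [hEdef, ← hd2, ha]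
          nlinarith
        have h5 : s * t ≤ |s| * |t| := by rw [← abs_mul]; exact le_abs_self _
        have h6 : (0:ℝ) ≤ t0^q - t0 := by linarith
        have h7 : t0^q - t0 ≤ E := by linarith
        calc negKer q u v * s * t = t0 * s * t + (t0^q - t0) * (s * t) := by rw [hK]; ring
          _ ≤ t0 * s * t + (t0^q - t0) * (|s| * |t|) := by
              have := mul_le_mul_of_nonneg_left h5 h6; linarith
          _ ≤ t0 * s * t + E * (|s| * |t|) := by
              have := mul_le_mul_of_nonneg_right h7 (by positivity : (0:ℝ) ≤ |s| * |t|)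
              linarith
          _ = t0 * s * t + E * |s| * |t| := by ring
    -- master bound over V
    have master : ∀ η : V → ℝ, (∑ v, η v) = 0 →
        (∑ u, ∑ v, negKer q u v * η u * η v) ≤ -(c/2) * ∑ v, (η v)^2 := by
      intro η hη
      have step : ∀ u, (∑ v, negKer q u v * η u * η v)
          ≤ (∑ v, ((G.dist u v : ℕ) : ℝ) * η u * η v) + ∑ v, E * |η u| * |η v| := by
        intro u
        rw [← Finset.sum_add_distrib]
        exact Finset.sum_le_sum (fun v _ => hterm u v (η u) (η v))
      have habs : (∑ u, ∑ v, E * |η u| * |η v|)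
          = E * ((∑ v, |η v|) * (∑ v, |η v|)) := by
        rw [Finset.sum_mul_sum]
        rw [Finset.mul_sum]
        refine Finset.sum_congr rfl fun u _ => ?_
        rw [Finset.mul_sum]
        exact Finset.sum_congr rfl fun v _ => by ring
      have hsum1 : (∑ u, ∑ v, negKer q u v * η u * η v)
          ≤ (∑ u, ∑ v, ((G.dist u v : ℕ) : ℝ) * η u * η v)
            + E * ((∑ v, |η v|) * (∑ v, |η v|)) := by
        calc (∑ u, ∑ v, negKer q u v * η u * η v)
            ≤ ∑ u, ((∑ v, ((G.dist u v : ℕ) : ℝ) * η u * η v) + ∑ v, E * |η u| * |η v|) :=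
              Finset.sum_le_sum (fun u _ => step u)
          _ = (∑ u, ∑ v, ((G.dist u v : ℕ) : ℝ) * η u * η v)
              + ∑ u, ∑ v, E * |η u| * |η v| := Finset.sum_add_distrib
          _ = _ := by rw [habs]
      have hCS : (∑ v, |η v|) * (∑ v, |η v|) ≤ (n:ℝ) * ∑ v, (η v)^2 := by
        have h := sq_sum_le_card_mul_sum_sq (s := (Finset.univ : Finset V))
          (f := fun v => |η v|)
        have h2 : ∀ v : V, |η v|^2 = (η v)^2 := fun v => sq_abs _
        rw [Finset.sum_congr rfl (fun v _ => h2 v)] at h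
        calc (∑ v, |η v|) * (∑ v, |η v|) = (∑ v, |η v|)^2 := (sq _).symm
          _ ≤ (Finset.univ.card : ℝ) * ∑ v, (η v)^2 := by exact_mod_cast h
          _ = (n:ℝ) * ∑ v, (η v)^2 := by rw [Finset.card_univ, hn]
      have hEn : E * (n:ℝ) ≤ c / 2 := by
        have h1 : E * (n:ℝ) ≤ ε * (n:ℝ) :=
          mul_le_mul_of_nonneg_right hDq.le (by linarith)
        have h2 : ε * (n:ℝ) = c / 2 := by
          rw [hε]; field_simp
        exact le_of_le_of_eq h1 h2
      have hq1b := hQ1 η hη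
      have hA0 : (0:ℝ) ≤ ∑ v, (η v)^2 := by positivity
      have t1 : E * ((∑ v, |η v|) * (∑ v, |η v|)) ≤ E * ((n:ℝ) * ∑ v, (η v)^2) :=
        mul_le_mul_of_nonneg_left hCS hE0
      have t3 : (E * (n:ℝ)) * (∑ v, (η v)^2) ≤ (c/2) * (∑ v, (η v)^2) :=
        mul_le_mul_of_nonneg_right hEn hA0
      nlinarith
    -- pushforward machinery
    have push : ∀ (k : ℕ) (x : Fin k → V) (η : Fin k → ℝ) (g : V → ℝ),
        (∑ v, g v * (∑ i, if x i = v then η i else 0)) = ∑ i, g (x i) * η i := by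
      intro k x η g
      calc (∑ v, g v * (∑ i, if x i = v then η i else 0))
          = ∑ v, ∑ i, (if x i = v then g v * η i else 0) := by
            refine Finset.sum_congr rfl fun v _ => ?_
            rw [Finset.mul_sum]
            refine Finset.sum_congr rfl fun i _ => ?_
            by_cases h : x i = v <;> simp [h]
        _ = ∑ i, ∑ v, (if x i = v then g v * η i else 0) := Finset.sum_comm
        _ = ∑ i, g (x i) * η i := by
            refine Finset.sum_congr rfl fun i _ => ?_
            rw [Finset.sum_ite_eq Finset.univ (x i) (fun v => g v * η i)]
            simp
    have transfer : ∀ (k : ℕ) (x : Fin k → V) (η : Fin k → ℝ),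
        (∑ i, ∑ j, negKer q (x i) (x j) * η i * η j)
          = ∑ u, ∑ v, negKer q u v * (∑ i, if x i = u then η i else 0)
              * (∑ j, if x j = v then η j else 0) := by
      intro k x η
      set η' : V → ℝ := fun v => ∑ i, if x i = v then η i else 0 with hη'
      have e1 : (∑ u, ∑ v, negKer q u v * η' u * η' v)
          = ∑ u, (∑ v, negKer q u v * η' v) * η' u := by
        refine Finset.sum_congr rfl fun u _ => ?_
        rw [Finset.sum_mul]
        exact Finset.sum_congr rfl fun v _ => by ring
      have e2 : (∑ u, (∑ v, negKer q u v * η' v) * η' u)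
          = ∑ i, (∑ v, negKer q (x i) v * η' v) * η i :=
        push k x η (fun u => ∑ v, negKer q u v * η' v)
      have e3 : ∀ i : Fin k, (∑ v, negKer q (x i) v * η' v)
          = ∑ j, negKer q (x i) (x j) * η j :=
        fun i => push k x η (fun v => negKer q (x i) v)
      calc (∑ i, ∑ j, negKer q (x i) (x j) * η i * η j)
          = ∑ i, (∑ j, negKer q (x i) (x j) * η j) * η i := by
            refine Finset.sum_congr rfl fun i _ => ?_
            rw [Finset.sum_mul]
            exact Finset.sum_congr rfl fun j _ => by ring
        _ = ∑ i, (∑ v, negKer q (x i) v * η' v) * η i := by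
            exact Finset.sum_congr rfl fun i _ => by rw [e3 i]
        _ = ∑ u, (∑ v, negKer q u v * η' v) * η' u := e2.symm
        _ = ∑ u, ∑ v, negKer q u v * η' u * η' v := e1.symm
    -- conclude
    have main : ∀ (k : ℕ), 2 ≤ k → ∀ (x : Fin k → V), Function.Injective x →
        ∀ (η : Fin k → ℝ), (∑ i, η i) = 0 →
          (∑ i, ∑ j, negKer q (x i) (x j) * η i * η j)
            ≤ -(c/2) * ∑ v, ((∑ i, if x i = v then η i else 0))^2 := by
      intro k hk x hinj η hsum
      have hsum' : (∑ v, (∑ i, if x i = v then η i else 0)) = 0 := by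
        have := push k x η (fun _ => (1:ℝ))
        simpa [hsum] using this
      rw [transfer k x η]
      exact master _ hsum'
    refine ⟨?_, ?_⟩
    · intro k hk x hinj η hsum
      have h := main k hk x hinj η hsum
      have hA0 : (0:ℝ) ≤ ∑ v, ((∑ i, if x i = v then η i else 0))^2 := by positivity
      have hle : -(c/2) * (∑ v, ((∑ i, if x i = v then η i else 0))^2) ≤ 0 :=
        mul_nonpos_of_nonpos_of_nonneg (by linarith) hA0
      exact h.trans hle
    · intro k hk x hinj η hsum hne
      have h := main k hk x hinj η hsum
      obtain ⟨i, hi⟩ := Function.ne_iff.mp hne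
      have hxi : (∑ j, if x j = x i then η j else 0) = η i := by
        have hpt : ∀ j, (if x j = x i then η j else 0) = if j = i then η j else 0 := by
          intro j
          by_cases hj : j = i
          · simp [hj]
          · have : x j ≠ x i := fun hh => hj (hinj hh)
            simp [hj, this]
        rw [Finset.sum_congr rfl (fun j _ => hpt j), Finset.sum_ite_eq' Finset.univ i η]
        simp
      have hpos : 0 < ∑ v, ((∑ j, if x j = v then η j else 0))^2 := by
        have h1 : ((∑ j, if x j = x i then η j else 0))^2
            ≤ ∑ v, ((∑ j, if x j = v then η j else 0))^2 :=
          Finset.single_le_sum (f := fun v => ((∑ j, if x j = v then η j else 0))^2)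
            (fun v _ => sq_nonneg _) (Finset.mem_univ (x i))
        have h2 : (0:ℝ) < ((∑ j, if x j = x i then η j else 0))^2 := by
          rw [hxi]
          exact lt_of_le_of_ne (sq_nonneg _) (Ne.symm (pow_ne_zero _ hi))
        linarith
      have hlt : -(c/2) * (∑ v, ((∑ j, if x j = v then η j else 0))^2) < 0 :=
        mul_neg_of_neg_of_pos (by linarith) hpos
      exact lt_of_le_of_lt h hlt
end

section
/- Let X be a topological space and let Ψ : X × X → ℝ be a continuous kernel with Ψ(x,x) = 0 and Ψ(x,y) = Ψ(y,x) for all x,y ∈ X. Then Ψ is conditionally of negative type if and only if for every t ≥ 0 the kernel Φ = e^{−tΨ} is of positive type. -/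
open scoped BigOperators ComplexOrder Matrix Nat
open Filter Topology

/-- A kernel of positive type on a topological space `X`. -/
def IsPosTypeKernel {X : Type*} [TopologicalSpace X] (Φ : X × X → ℂ) : Prop :=
  Continuous Φ ∧
  ∀ (k : ℕ) (x : Fin k → X) (η : Fin k → ℂ),
    0 ≤ ∑ i, ∑ j, Φ (x i, x j) * η i * (starRingEnd ℂ) (η j)

/-- A kernel conditionally of negative type on a topological space `X`. -/
def IsCondNegKernel {X : Type*} [TopologicalSpace X] (Ψ : X × X → ℝ) : Prop :=
  Continuous Ψ ∧ (∀ x, Ψ (x, x) = 0) ∧ (∀ x y, Ψ (x, y) = Ψ (y, x)) ∧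
  ∀ (k : ℕ) (x : Fin k → X) (η : Fin k → ℝ), (∑ i, η i) = 0 →
    (∑ i, ∑ j, Ψ (x i, x j) * η i * η j) ≤ 0

private lemma schur_mul {k : ℕ} (A : Fin k → Fin k → ℝ) (M : Matrix (Fin k) (Fin k) ℝ)
    (hA : ∀ ξ : Fin k → ℝ, 0 ≤ ∑ i, ∑ j, A i j * ξ i * ξ j) (hM : M.PosSemidef)
    (ξ : Fin k → ℝ) : 0 ≤ ∑ i, ∑ j, A i j * M i j * ξ i * ξ j := by
  obtain ⟨C, rfl⟩ : ∃ C : Matrix (Fin k) (Fin k) ℝ, M = Cᴴ * C := by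
    open scoped MatrixOrder in
    exact CStarAlgebra.nonneg_iff_eq_star_mul_self.mp hM.nonneg
  have hentry : ∀ i j, (Cᴴ * C) i j = ∑ r, C r i * C r j := by
    intro i j
    simp [Matrix.mul_apply, Matrix.conjTranspose_apply]
  calc (0:ℝ) ≤ ∑ r, ∑ i, ∑ j, A i j * (C r i * ξ i) * (C r j * ξ j) :=
        Finset.sum_nonneg fun r _ => hA fun i => C r i * ξ i
    _ = ∑ i, ∑ j, A i j * (Cᴴ * C) i j * ξ i * ξ j := by
        rw [Finset.sum_comm]
        refine Finset.sum_congr rfl fun i _ => ?_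
        rw [Finset.sum_comm]
        refine Finset.sum_congr rfl fun j _ => ?_
        rw [hentry, Finset.mul_sum, Finset.sum_mul, Finset.sum_mul]
        exact Finset.sum_congr rfl fun r _ => by ring

private lemma pow_form {k : ℕ} (M : Matrix (Fin k) (Fin k) ℝ) (hM : M.PosSemidef) :
    ∀ (n : ℕ) (ξ : Fin k → ℝ), 0 ≤ ∑ i, ∑ j, (M i j) ^ n * ξ i * ξ j := by
  intro n
  induction n with
  | zero =>
    intro ξ
    have h : ∑ i, ∑ j, (M i j) ^ 0 * ξ i * ξ j = (∑ i, ξ i) * (∑ j, ξ j) := by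
      rw [Finset.sum_mul_sum]
      exact Finset.sum_congr rfl fun i _ => Finset.sum_congr rfl fun j _ => by ring
    rw [h]
    exact mul_self_nonneg _
  | succ n ih =>
    intro ξ
    calc (0:ℝ) ≤ ∑ i, ∑ j, (M i j) ^ n * M i j * ξ i * ξ j :=
          schur_mul (fun i j => (M i j) ^ n) M ih hM ξ
      _ = _ := Finset.sum_congr rfl fun i _ => Finset.sum_congr rfl fun j _ => by ring

private lemma exp_form {k : ℕ} (M : Matrix (Fin k) (Fin k) ℝ) (hM : M.PosSemidef)
    (ξ : Fin k → ℝ) : 0 ≤ ∑ i, ∑ j, Real.exp (M i j) * ξ i * ξ j := by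
  have hexp : ∀ c : ℝ, Real.exp c = ∑' n : ℕ, c ^ n / n ! := by
    intro c; rw [Real.exp_eq_exp_ℝ, NormedSpace.exp_eq_tsum_div]
  have hsum : ∀ i j : Fin k, Summable (fun n : ℕ => (M i j) ^ n / n ! * (ξ i * ξ j)) :=
    fun i j => (Real.summable_pow_div_factorial _).mul_right _
  have key : ∑ i, ∑ j, Real.exp (M i j) * ξ i * ξ j
      = ∑' n : ℕ, ∑ i, ∑ j, (M i j) ^ n / n ! * (ξ i * ξ j) := by
    rw [Summable.tsum_finsetSum (fun i _ => summable_sum fun j _ => hsum i j)]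
    refine Finset.sum_congr rfl fun i _ => ?_
    rw [Summable.tsum_finsetSum (fun j _ => hsum i j)]
    refine Finset.sum_congr rfl fun j _ => ?_
    rw [hexp, mul_assoc, ← tsum_mul_right]
  rw [key]
  refine tsum_nonneg fun n => ?_
  have h := pow_form M hM n ξ
  have heq : ∑ i, ∑ j, (M i j) ^ n / n ! * (ξ i * ξ j)
      = (∑ i, ∑ j, (M i j) ^ n * ξ i * ξ j) / n ! := by
    rw [Finset.sum_div]
    refine Finset.sum_congr rfl fun i _ => ?_
    rw [Finset.sum_div]
    exact Finset.sum_congr rfl fun j _ => by ring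
  rw [heq]
  exact div_nonneg h (by positivity)

private lemma posSemidef_of_form {k : ℕ} (M : Matrix (Fin k) (Fin k) ℝ)
    (hsym : ∀ i j, M i j = M j i)
    (hform : ∀ ξ : Fin k → ℝ, 0 ≤ ∑ i, ∑ j, M i j * ξ i * ξ j) : M.PosSemidef := by
  refine Matrix.posSemidef_iff_dotProduct_mulVec.mpr ⟨Matrix.ext fun i j => ?_, fun ξ => ?_⟩
  · rw [Matrix.conjTranspose_apply, star_trivial]
    exact hsym j i
  · have h : (star ξ) ⬝ᵥ (M *ᵥ ξ) = ∑ i, ∑ j, M i j * ξ i * ξ j := by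
      simp only [dotProduct, Matrix.mulVec, Pi.star_apply, star_trivial,
        Finset.mul_sum]
      exact Finset.sum_congr rfl fun i _ => Finset.sum_congr rfl fun j _ => by ring
    rw [h]
    exact hform ξ

private lemma real_pos_form {X : Type*} [TopologicalSpace X] {Ψ : X × X → ℝ}
    (hdiag : ∀ x, Ψ (x, x) = 0) (hsymm : ∀ x y, Ψ (x, y) = Ψ (y, x))
    (hneg : ∀ (k : ℕ) (x : Fin k → X) (η : Fin k → ℝ), (∑ i, η i) = 0 →
      (∑ i, ∑ j, Ψ (x i, x j) * η i * η j) ≤ 0)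
    {t : ℝ} (ht : 0 ≤ t) (k : ℕ) (x : Fin k → X) (ξ : Fin k → ℝ) :
    0 ≤ ∑ i, ∑ j, Real.exp (-(t * Ψ (x i, x j))) * ξ i * ξ j := by
  obtain _ | m := k
  · simp
  set x0 : X := x 0 with hx0
  set B : Matrix (Fin (m+1)) (Fin (m+1)) ℝ :=
    Matrix.of fun i j => t * Ψ (x i, x0) + t * Ψ (x j, x0) - t * Ψ (x i, x j) with hB
  have hBsym : ∀ i j, B i j = B j i := by
    intro i j
    simp only [hB, Matrix.of_apply]
    rw [hsymm (x i) (x j)]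
    ring
  have hBform : ∀ ξ' : Fin (m+1) → ℝ, 0 ≤ ∑ i, ∑ j, B i j * ξ' i * ξ' j := by
    intro ξ'
    set s : ℝ := ∑ i, ξ' i with hs
    set S : ℝ := ∑ i, Ψ (x i, x0) * ξ' i with hS
    set Q : ℝ := ∑ i, ∑ j, Ψ (x i, x j) * ξ' i * ξ' j with hQc
    set y : Fin (m+2) → X := Fin.cons x0 x with hy
    set g : Fin (m+2) → ℝ := Fin.cons (-s) ξ' with hg
    have hc := hneg (m+2) y g
      (by rw [hg, Fin.sum_univ_succ]; simp [Fin.cons_zero, Fin.cons_succ, hs])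
    have hrow0 : ∑ j : Fin (m+2), Ψ (y 0, y j) * g 0 * g j
        = s * s * Ψ (x0, x0) + -(s * S) := by
      rw [hy, hg, Fin.sum_univ_succ]
      simp only [Fin.cons_zero, Fin.cons_succ]
      rw [show (fun (j : Fin (m+1)) => Ψ (x0, x j) * -s * ξ' j)
          = (fun j => (-s) * (Ψ (x j, x0) * ξ' j)) from
        funext fun j => by rw [hsymm x0 (x j)]; ring, ← Finset.mul_sum, ← hS]
      ring
    have hrow : ∀ i : Fin (m+1), ∑ j : Fin (m+2), Ψ (y i.succ, y j) * g i.succ * g j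
        = Ψ (x i, x0) * ξ' i * (-s) + ∑ j : Fin (m+1), Ψ (x i, x j) * ξ' i * ξ' j := by
      intro i
      rw [hy, hg, Fin.sum_univ_succ]
      simp only [Fin.cons_zero, Fin.cons_succ]
    have hE : ∑ i : Fin (m+2), ∑ j : Fin (m+2), Ψ (y i, y j) * g i * g j
        = Q - 2 * s * S := by
      rw [Fin.sum_univ_succ, hrow0, Finset.sum_congr rfl (fun i _ => hrow i),
        Finset.sum_add_distrib]
      have e2 : ∑ i, Ψ (x i, x0) * ξ' i * (-s) = -(s * S) := by
        rw [show (fun (i : Fin (m+1)) => Ψ (x i, x0) * ξ' i * (-s))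
            = (fun i => (Ψ (x i, x0) * ξ' i) * (-s)) from funext fun i => by ring,
          ← Finset.sum_mul, ← hS]
        ring
      rw [e2, ← hQc, hdiag x0]
      ring
    rw [hE] at hc
    have hBeq : ∑ i, ∑ j, B i j * ξ' i * ξ' j = t * (2 * s * S - Q) := by
      have h1 : ∀ i, ∑ j, B i j * ξ' i * ξ' j
          = (t * (Ψ (x i, x0) * ξ' i)) * s + (t * ξ' i) * S
            - t * ∑ j, Ψ (x i, x j) * ξ' i * ξ' j := by
        intro i
        calc ∑ j, B i j * ξ' i * ξ' j
            = ∑ j, ((t * (Ψ (x i, x0) * ξ' i)) * ξ' j + (t * ξ' i) * (Ψ (x j, x0) * ξ' j)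
              - t * (Ψ (x i, x j) * ξ' i * ξ' j)) :=
              Finset.sum_congr rfl fun j _ => by
                simp only [hB, Matrix.of_apply]; ring
          _ = _ := by
              rw [Finset.sum_sub_distrib, Finset.sum_add_distrib, ← Finset.mul_sum,
                ← Finset.mul_sum, ← Finset.mul_sum, ← hs, ← hS]
      calc ∑ i, ∑ j, B i j * ξ' i * ξ' j
          = ∑ i, ((t * (Ψ (x i, x0) * ξ' i)) * s + (t * ξ' i) * S
            - t * ∑ j, Ψ (x i, x j) * ξ' i * ξ' j) := Finset.sum_congr rfl fun i _ => h1 i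
        _ = t * (2 * s * S - Q) := by
            rw [Finset.sum_sub_distrib, Finset.sum_add_distrib, ← Finset.sum_mul,
              ← Finset.sum_mul, ← Finset.mul_sum, ← Finset.mul_sum, ← Finset.mul_sum,
              ← hQc, ← hS, ← hs]
            ring
    rw [hBeq]
    have : Q ≤ 2 * s * S := by linarith
    have h2 : 0 ≤ 2 * s * S - Q := by linarith
    exact mul_nonneg ht h2
  have hPSD : B.PosSemidef := posSemidef_of_form B hBsym hBform
  have hfin : ∀ i j, Real.exp (-(t * Ψ (x i, x j))) * ξ i * ξ j
      = Real.exp (B i j) * (Real.exp (-(t * Ψ (x i, x0))) * ξ i)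
          * (Real.exp (-(t * Ψ (x j, x0))) * ξ j) := by
    intro i j
    rw [show -(t * Ψ (x i, x j)) = B i j + (-(t * Ψ (x i, x0))) + (-(t * Ψ (x j, x0))) from by
      simp only [hB, Matrix.of_apply]; ring, Real.exp_add, Real.exp_add]
    ring
  calc (0:ℝ) ≤ ∑ i, ∑ j, Real.exp (B i j) * (Real.exp (-(t * Ψ (x i, x0))) * ξ i)
        * (Real.exp (-(t * Ψ (x j, x0))) * ξ j) :=
        exp_form B hPSD fun i => Real.exp (-(t * Ψ (x i, x0))) * ξ i
    _ = _ := Finset.sum_congr rfl fun i _ => Finset.sum_congr rfl fun j _ => (hfin i j).symm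

private lemma complex_of_real_form {k : ℕ} (K : Fin k → Fin k → ℝ)
    (hsym : ∀ i j, K i j = K j i)
    (hpos : ∀ ξ : Fin k → ℝ, 0 ≤ ∑ i, ∑ j, K i j * ξ i * ξ j) (η : Fin k → ℂ) :
    0 ≤ ∑ i, ∑ j, (K i j : ℂ) * η i * (starRingEnd ℂ) (η j) := by
  rw [Complex.le_def]
  constructor
  · simp only [Complex.zero_re]
    have hre : (∑ i, ∑ j, (K i j : ℂ) * η i * (starRingEnd ℂ) (η j)).re
        = ∑ i, ∑ j, (K i j * (η i).re * (η j).re + K i j * (η i).im * (η j).im) := by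
      rw [Complex.re_sum]
      refine Finset.sum_congr rfl fun i _ => ?_
      rw [Complex.re_sum]
      refine Finset.sum_congr rfl fun j _ => ?_
      simp only [Complex.mul_re, Complex.mul_im, Complex.conj_re, Complex.conj_im,
        Complex.ofReal_re, Complex.ofReal_im]
      ring
    rw [hre]
    simp only [Finset.sum_add_distrib]
    exact add_nonneg (hpos fun i => (η i).re) (hpos fun i => (η i).im)
  · simp only [Complex.zero_im]
    have him : (∑ i, ∑ j, (K i j : ℂ) * η i * (starRingEnd ℂ) (η j)).im
        = ∑ i, ∑ j, (K i j * (η i).im * (η j).re - K i j * (η i).re * (η j).im) := by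
      rw [Complex.im_sum]
      refine Finset.sum_congr rfl fun i _ => ?_
      rw [Complex.im_sum]
      refine Finset.sum_congr rfl fun j _ => ?_
      simp only [Complex.mul_re, Complex.mul_im, Complex.conj_re, Complex.conj_im,
        Complex.ofReal_re, Complex.ofReal_im]
      ring
    rw [him]
    simp only [Finset.sum_sub_distrib]
    have hswap : ∑ i, ∑ j, K i j * (η i).im * (η j).re
        = ∑ i, ∑ j, K i j * (η i).re * (η j).im := by
      rw [Finset.sum_comm]
      refine Finset.sum_congr rfl fun i _ => Finset.sum_congr rfl fun j _ => ?_
      rw [hsym]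
      ring
    rw [hswap, sub_self]

/-- Schoenberg's theorem: a continuous symmetric kernel `Ψ` vanishing on the
diagonal is conditionally of negative type iff `e^{-tΨ}` is of positive type
for every `t ≥ 0`. -/
theorem condNegKernel_iff_exp_posType {X : Type*} [TopologicalSpace X]
    (Ψ : X × X → ℝ) (hcont : Continuous Ψ) (hdiag : ∀ x, Ψ (x, x) = 0)
    (hsymm : ∀ x y, Ψ (x, y) = Ψ (y, x)) :
    IsCondNegKernel Ψ ↔
      ∀ t : ℝ, 0 ≤ t →
        IsPosTypeKernel (fun q : X × X => (Real.exp (-(t * Ψ q)) : ℂ)) := by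
  constructor
  · rintro ⟨-, -, -, hneg⟩ t ht
    refine ⟨Complex.continuous_ofReal.comp (Real.continuous_exp.comp
      ((continuous_const.mul hcont).neg)), fun k x η => ?_⟩
    exact complex_of_real_form (fun i j => Real.exp (-(t * Ψ (x i, x j))))
      (fun i j => by rw [hsymm (x i) (x j)])
      (fun ξ => real_pos_form hdiag hsymm hneg ht k x ξ) η
  · intro hpt
    refine ⟨hcont, hdiag, hsymm, fun k x ξ hsum => ?_⟩
    have hfK : ∀ t : ℝ, 0 < t →
        0 ≤ ∑ i, ∑ j, Real.exp (-(t * Ψ (x i, x j))) * ξ i * ξ j := by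
      intro t ht
      have h2 : 0 ≤ ∑ i, ∑ j, ((Real.exp (-(t * Ψ (x i, x j))) : ℝ) : ℂ)
          * (ξ i : ℂ) * (starRingEnd ℂ) ((ξ j : ℂ)) :=
        (hpt t ht.le).2 k x fun i => (ξ i : ℂ)
      have heq : ∑ i, ∑ j, ((Real.exp (-(t * Ψ (x i, x j))) : ℝ) : ℂ)
          * (ξ i : ℂ) * (starRingEnd ℂ) ((ξ j : ℂ))
          = ((∑ i, ∑ j, Real.exp (-(t * Ψ (x i, x j))) * ξ i * ξ j : ℝ) : ℂ) := by
        push_cast [Complex.conj_ofReal]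
        norm_num
      rw [heq] at h2
      exact Complex.zero_le_real.mp h2
    have hQ0 : ∑ i, ∑ j, ξ i * ξ j = 0 := by
      rw [← Finset.sum_mul_sum, hsum, zero_mul]
    have hterm : ∀ c : ℝ, Tendsto (fun t : ℝ => (Real.exp (-(t * c)) - 1) / t)
        (𝓝[≠] (0:ℝ)) (𝓝 (-c)) := by
      intro c
      have hd : HasDerivAt (fun t : ℝ => Real.exp (-(t * c))) (-c) 0 := by
        have h1 : HasDerivAt (fun t : ℝ => -(t * c)) (-c) 0 := (hasDerivAt_mul_const c).neg
        simpa using h1.exp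
      have hsl := hasDerivAt_iff_tendsto_slope.mp hd
      refine hsl.congr fun u => ?_
      rw [slope_def_field]
      simp only [zero_mul, neg_zero, Real.exp_zero]
      rw [sub_zero]
    have hT : Tendsto (fun t : ℝ => ∑ i, ∑ j,
        ((Real.exp (-(t * Ψ (x i, x j))) - 1) / t) * ξ i * ξ j)
        (𝓝[>] (0:ℝ))
        (𝓝 (∑ i, ∑ j, -Ψ (x i, x j) * ξ i * ξ j)) := by
      refine Tendsto.mono_left ?_ (nhdsWithin_mono 0 fun u hu => ne_of_gt (Set.mem_Ioi.mp hu))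
      refine tendsto_finset_sum _ fun i _ => tendsto_finset_sum _ fun j _ => ?_
      exact ((hterm (Ψ (x i, x j))).mul_const (ξ i)).mul_const (ξ j)
    have hlim : ∑ i, ∑ j, -Ψ (x i, x j) * ξ i * ξ j
        = -(∑ i, ∑ j, Ψ (x i, x j) * ξ i * ξ j) := by
      simp [neg_mul, Finset.sum_neg_distrib]
    have hev : ∀ᶠ u in 𝓝[>] (0:ℝ), 0 ≤ ∑ i, ∑ j,
        ((Real.exp (-(u * Ψ (x i, x j))) - 1) / u) * ξ i * ξ j := by
      refine eventually_nhdsWithin_of_forall fun u hu => ?_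
      have hGu : ∑ i, ∑ j, ((Real.exp (-(u * Ψ (x i, x j))) - 1) / u) * ξ i * ξ j
          = (∑ i, ∑ j, Real.exp (-(u * Ψ (x i, x j))) * ξ i * ξ j) / u := by
        calc ∑ i, ∑ j, ((Real.exp (-(u * Ψ (x i, x j))) - 1) / u) * ξ i * ξ j
            = ∑ i, ∑ j, (Real.exp (-(u * Ψ (x i, x j))) * ξ i * ξ j / u - ξ i * ξ j / u) :=
              Finset.sum_congr rfl fun i _ => Finset.sum_congr rfl fun j _ => by ring
          _ = (∑ i, ∑ j, Real.exp (-(u * Ψ (x i, x j))) * ξ i * ξ j) / u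
              - (∑ i, ∑ j, ξ i * ξ j) / u := by
              simp only [Finset.sum_sub_distrib, ← Finset.sum_div]
          _ = _ := by rw [hQ0, zero_div, sub_zero]
      rw [hGu]
      exact div_nonneg (hfK u hu) (le_of_lt hu)
    have hfin := ge_of_tendsto hT hev
    rw [hlim] at hfin
    linarith
end

section
/- Let (X,d) be a metric space (finite or infinite). If (X,d) has p-negative type for some p > 0, then (X,d) has strict q-negative type for every q with 0 ≤ q < p. -/
open scoped BigOperators

lemma negKer_eq_rpow {X : Type*} [MetricSpace X] {p : ℝ} (hp : p ≠ 0) (a b : X) :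
    negKer p a b = dist a b ^ p := by
  unfold negKer
  split
  · next h => simp [h, Real.zero_rpow hp]
  · rfl

/-- A kernel on `Fin k` given by a Gram-type decomposition. -/
def IsPDK {k : ℕ} (K : Fin k → Fin k → ℝ) : Prop :=
  ∃ (ι : Type) (_ : Fintype ι) (v : ι → Fin k → ℝ), ∀ i j, K i j = ∑ r, v r i * v r j

lemma IsPDK.form_nonneg {k : ℕ} {K : Fin k → Fin k → ℝ} (hK : IsPDK K) (ζ : Fin k → ℝ) :
    0 ≤ ∑ i, ∑ j, ζ i * ζ j * K i j := by
  obtain ⟨ι, _, v, hv⟩ := hK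
  have h1 : ∑ i, ∑ j, ζ i * ζ j * K i j
      = ∑ i, ∑ j, ∑ r, (ζ i * v r i) * (ζ j * v r j) := by
    refine Finset.sum_congr rfl fun i _ => Finset.sum_congr rfl fun j _ => ?_
    rw [hv, Finset.mul_sum]
    exact Finset.sum_congr rfl fun r _ => by ring
  have h2 : ∑ i, ∑ j, ∑ r, (ζ i * v r i) * (ζ j * v r j)
      = ∑ r : ι, (∑ i, ζ i * v r i) ^ 2 := by
    calc ∑ i, ∑ j, ∑ r, (ζ i * v r i) * (ζ j * v r j)
        = ∑ i, ∑ r, ∑ j, (ζ i * v r i) * (ζ j * v r j) :=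
          Finset.sum_congr rfl fun i _ => Finset.sum_comm
      _ = ∑ r, ∑ i, ∑ j, (ζ i * v r i) * (ζ j * v r j) := Finset.sum_comm
      _ = ∑ r : ι, (∑ i, ζ i * v r i) ^ 2 :=
          Finset.sum_congr rfl fun r _ => by rw [sq, Finset.sum_mul_sum]
  rw [h1, h2]
  exact Finset.sum_nonneg fun r _ => sq_nonneg _

lemma IsPDK.mul {k : ℕ} {K K' : Fin k → Fin k → ℝ} (hK : IsPDK K) (hK' : IsPDK K') :
    IsPDK (fun i j => K i j * K' i j) := by
  obtain ⟨ι, _, v, hv⟩ := hK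
  obtain ⟨ι', _, w, hw⟩ := hK'
  refine ⟨ι × ι', inferInstance, fun r i => v r.1 i * w r.2 i, fun i j => ?_⟩
  dsimp only
  rw [hv, hw, Finset.sum_mul_sum, Fintype.sum_prod_type]
  congr 1; ext r; congr 1; ext r'
  ring

lemma IsPDK.one {k : ℕ} : IsPDK (fun _ _ : Fin k => (1 : ℝ)) :=
  ⟨Unit, inferInstance, fun _ _ => 1, by simp⟩

lemma IsPDK.pow {k : ℕ} {K : Fin k → Fin k → ℝ} (hK : IsPDK K) (n : ℕ) :
    IsPDK (fun i j => K i j ^ n) := by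
  induction n with
  | zero => simpa using IsPDK.one
  | succ n ih => simpa [pow_succ] using ih.mul hK

lemma IsPDK.of_posSemidef {k : ℕ} (M : Matrix (Fin k) (Fin k) ℝ) (h : M.PosSemidef) :
    IsPDK (fun i j => M i j) := by
  open scoped MatrixOrder Matrix.Norms.L2Operator in
  obtain ⟨A, hA⟩ := CStarAlgebra.nonneg_iff_eq_star_mul_self.mp h.nonneg
  refine ⟨Fin k, inferInstance, fun r i => A r i, fun i j => ?_⟩
  dsimp only
  rw [hA, Matrix.mul_apply]
  simp [Matrix.star_apply]

lemma expForm_nonneg {k : ℕ} {B : Fin k → Fin k → ℝ} (hB : IsPDK B) {s : ℝ} (hs : 0 ≤ s)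
    (ζ : Fin k → ℝ) : 0 ≤ ∑ i, ∑ j, ζ i * ζ j * Real.exp (s * B i j) := by
  have hsum : ∀ i j : Fin k, Summable (fun n : ℕ => ζ i * ζ j * ((s * B i j) ^ n / n.factorial)) :=
    fun i j => (Real.summable_pow_div_factorial (s * B i j)).mul_left _
  have hexp : ∀ i j : Fin k, ζ i * ζ j * Real.exp (s * B i j)
      = tsum (fun n : ℕ => ζ i * ζ j * ((s * B i j) ^ n / n.factorial)) := by
    intro i j
    rw [Real.exp_eq_exp_ℝ, NormedSpace.exp_eq_tsum_div, tsum_mul_left]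
  have h1 : ∑ i, ∑ j, ζ i * ζ j * Real.exp (s * B i j)
      = tsum (fun n : ℕ => ∑ i, ∑ j, ζ i * ζ j * ((s * B i j) ^ n / n.factorial)) := by
    rw [Summable.tsum_finsetSum (fun i _ => summable_sum (fun j _ => hsum i j))]
    refine Finset.sum_congr rfl fun i _ => ?_
    rw [Summable.tsum_finsetSum (fun j _ => hsum i j)]
    exact Finset.sum_congr rfl fun j _ => hexp i j
  rw [h1]
  refine tsum_nonneg fun n => ?_
  have hform : (0:ℝ) ≤ ∑ i, ∑ j, ζ i * ζ j * (B i j ^ n) := (hB.pow n).form_nonneg ζ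
  have h2 : ∑ i, ∑ j, ζ i * ζ j * ((s * B i j) ^ n / n.factorial)
      = (s ^ n / n.factorial) * ∑ i, ∑ j, ζ i * ζ j * (B i j ^ n) := by
    rw [Finset.mul_sum]
    refine Finset.sum_congr rfl fun i _ => ?_
    rw [Finset.mul_sum]
    refine Finset.sum_congr rfl fun j _ => ?_
    rw [mul_pow]; ring
  rw [h2]
  exact mul_nonneg (div_nonneg (pow_nonneg hs n) (Nat.cast_nonneg _)) hform

lemma schoenberg_nonneg {X : Type*} [MetricSpace X] {p : ℝ} (hp : 0 < p) (h : HasNegType X p)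
    {k : ℕ} (hk : 2 ≤ k) (x : Fin k → X) (hx : Function.Injective x) {s : ℝ} (hs : 0 ≤ s)
    (η : Fin k → ℝ) :
    0 ≤ ∑ i, ∑ j, η i * η j * Real.exp (-(s * dist (x i) (x j) ^ p)) := by
  haveI : NeZero k := ⟨by omega⟩
  set D : Fin k → Fin k → ℝ := fun i j => dist (x i) (x j) ^ p with hD
  have hDsymm : ∀ i j, D i j = D j i := fun i j => by simp [hD, dist_comm]
  have hD0 : ∀ i, D i i = 0 := fun i => by simp [hD, Real.zero_rpow hp.ne']
  have hBpsd : IsPDK (fun i j : Fin k => D i 0 + D 0 j - D i j) := by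
    have hform : ∀ ξ : Fin k → ℝ,
        0 ≤ ∑ i, ∑ j, (D i 0 + D 0 j - D i j) * ξ i * ξ j := by
      intro ξ
      set S : ℝ := ∑ i, ξ i with hS
      set T : ℝ := ∑ i, D i 0 * ξ i with hT
      set η' : Fin k → ℝ := fun i => ξ i - if i = (0 : Fin k) then S else 0 with hη'
      have hsum0 : (∑ i, η' i) = 0 := by
        simp [hη', Finset.sum_sub_distrib, Finset.sum_ite_eq', hS]
      have hneg := h k hk x hx η' hsum0
      have hrw : ∑ i, ∑ j, negKer p (x i) (x j) * η' i * η' j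
          = ∑ i, ∑ j, D i j * η' i * η' j :=
        Finset.sum_congr rfl fun i _ => Finset.sum_congr rfl fun j _ => by
          rw [negKer_eq_rpow hp.ne']
      rw [hrw] at hneg
      have hA : ∑ i, ∑ j, (D i 0 + D 0 j - D i j) * ξ i * ξ j
          = 2 * S * T - ∑ i, ∑ j, D i j * ξ i * ξ j := by
        have e1 : ∑ i, ∑ j, (D i 0 + D 0 j - D i j) * ξ i * ξ j
            = ∑ i, ∑ j, (D i 0 * ξ i * ξ j + D 0 j * ξ i * ξ j - D i j * ξ i * ξ j) :=
          Finset.sum_congr rfl fun i _ => Finset.sum_congr rfl fun j _ => by ring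
        rw [e1]
        simp only [Finset.sum_sub_distrib, Finset.sum_add_distrib]
        have e2 : ∑ i, ∑ j, D i 0 * ξ i * ξ j = T * S := by
          rw [hT, hS, Finset.sum_mul]
          exact Finset.sum_congr rfl fun i _ => (Finset.mul_sum _ _ _).symm
        have e3 : ∑ i, ∑ j, D 0 j * ξ i * ξ j = S * T := by
          have inner : ∀ i, ∑ j, D 0 j * ξ i * ξ j = ξ i * T := by
            intro i
            rw [hT, Finset.mul_sum]
            exact Finset.sum_congr rfl fun j _ => by rw [hDsymm 0 j]; ring
          rw [Finset.sum_congr rfl fun i _ => inner i, hS, Finset.sum_mul]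
        rw [e2, e3]
        ring
      have hB : ∑ i, ∑ j, D i j * η' i * η' j
          = (∑ i, ∑ j, D i j * ξ i * ξ j) - 2 * S * T := by
        have eexp : ∀ i j, D i j * η' i * η' j
            = D i j * ξ i * ξ j
              - (if j = (0 : Fin k) then D i j * ξ i * S else 0)
              - (if i = (0 : Fin k) then D i j * S * ξ j else 0)
              + (if i = (0 : Fin k) then (if j = (0 : Fin k) then D i j * S * S else 0) else 0) := by
          intro i j
          simp only [hη']
          split_ifs <;> ring
        rw [Finset.sum_congr rfl fun i _ => Finset.sum_congr rfl fun j _ => eexp i j]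
        simp only [Finset.sum_add_distrib, Finset.sum_sub_distrib, Finset.sum_ite_irrel,
          Finset.sum_const_zero, Finset.sum_ite_eq', Finset.mem_univ, if_true]
        have e4 : ∑ i, D i 0 * ξ i * S = T * S := by
          rw [hT, Finset.sum_mul]
        have e5 : ∑ j, D 0 j * S * ξ j = S * T := by
          rw [hT, Finset.mul_sum]
          exact Finset.sum_congr rfl fun j _ => by rw [hDsymm 0 j]; ring
        rw [e4, e5, hD0]
        ring
      rw [hB] at hneg
      rw [hA]
      linarith
    exact IsPDK.of_posSemidef (Matrix.of fun i j => D i 0 + D 0 j - D i j)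
      (Matrix.posSemidef_iff_dotProduct_mulVec.mpr ⟨by
        ext i j
        simp only [Matrix.conjTranspose_apply, Matrix.of_apply, star_trivial]
        rw [hDsymm j 0, hDsymm 0 i, hDsymm j i]
        ring
      , by
        intro ξ
        simpa [dotProduct, Matrix.mulVec, Finset.mul_sum, mul_assoc, mul_left_comm]
          using hform ξ⟩)
  have key := expForm_nonneg hBpsd hs (fun i => η i * Real.exp (-(s * D i 0)))
  have hconv : ∑ i, ∑ j,
      (η i * Real.exp (-(s * D i 0))) * (η j * Real.exp (-(s * D j 0)))
        * Real.exp (s * (D i 0 + D 0 j - D i j))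
      = ∑ i, ∑ j, η i * η j * Real.exp (-(s * D i j)) := by
    refine Finset.sum_congr rfl fun i _ => Finset.sum_congr rfl fun j _ => ?_
    rw [mul_mul_mul_comm, ← Real.exp_add, mul_assoc, ← Real.exp_add]
    congr 2
    rw [hDsymm j 0]
    ring
  rw [← hconv]
  exact key

open MeasureTheory Set Filter in
lemma rep_exists {α : ℝ} (hα0 : 0 < α) (hα1 : α < 1) :
    ∃ C : ℝ, 0 < C ∧ ∀ t : ℝ, 0 ≤ t →
      IntegrableOn (fun s => (1 - Real.exp (-(s * t))) * s ^ (-1 - α)) (Ioi (0:ℝ)) ∧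
      ∫ s in Ioi (0:ℝ), (1 - Real.exp (-(s * t))) * s ^ (-1 - α) = (t ^ α) * C := by
  set g : ℝ → ℝ := fun u => (1 - Real.exp (-u)) * u ^ (-1 - α) with hg
  have hgc : ContinuousOn g (Ioi (0:ℝ)) := by
    apply ContinuousOn.mul
    · exact (continuous_const.sub (Real.continuous_exp.comp continuous_neg)).continuousOn
    · exact ContinuousOn.rpow_const continuousOn_id (fun x hx => Or.inl (ne_of_gt hx))
  have hg_nonneg : ∀ u ∈ Ioi (0:ℝ), 0 ≤ g u := by
    intro u hu
    apply mul_nonneg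
    · have h1 : Real.exp (-u) ≤ Real.exp 0 := Real.exp_le_exp.mpr (by simpa using le_of_lt hu)
      rw [Real.exp_zero] at h1
      linarith
    · exact Real.rpow_nonneg (le_of_lt hu) _
  have hgi : IntegrableOn g (Ioi (0:ℝ)) := by
    rw [← Ioc_union_Ioi_eq_Ioi (zero_le_one (α := ℝ))]
    apply IntegrableOn.union
    · have hint : IntegrableOn (fun u : ℝ => u ^ (-α)) (Ioc 0 1) := by
        have h2 := intervalIntegral.intervalIntegrable_rpow' (a := (0:ℝ)) (b := 1) (show (-1:ℝ) < -α by linarith)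
        rwa [intervalIntegrable_iff_integrableOn_Ioc_of_le zero_le_one] at h2
      apply Integrable.mono' hint
        ((hgc.mono Ioc_subset_Ioi_self).aestronglyMeasurable measurableSet_Ioc)
      filter_upwards [ae_restrict_mem measurableSet_Ioc] with u hu
      have hu0 : (0:ℝ) < u := hu.1
      rw [Real.norm_eq_abs, abs_of_nonneg (hg_nonneg u hu0)]
      have h1 : 1 - Real.exp (-u) ≤ u := by nlinarith [Real.add_one_le_exp (-u)]
      have h2 : (0:ℝ) ≤ u ^ (-1-α) := Real.rpow_nonneg hu0.le _
      calc g u ≤ u * u ^ (-1 - α) := mul_le_mul_of_nonneg_right h1 h2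
        _ = u ^ (-α) := by
          rw [show u * u ^ (-1-α) = u ^ ((1:ℝ) + (-1-α)) by
            rw [Real.rpow_add hu0, Real.rpow_one]]
          congr 1
          ring
    · have hint := integrableOn_Ioi_rpow_of_lt (show -1-α < -1 by linarith) one_pos
      apply Integrable.mono' hint
        ((hgc.mono (Ioi_subset_Ioi zero_le_one)).aestronglyMeasurable measurableSet_Ioi)
      filter_upwards [ae_restrict_mem measurableSet_Ioi] with u hu
      have hu0 : (0:ℝ) < u := lt_trans one_pos hu
      rw [Real.norm_eq_abs, abs_of_nonneg (hg_nonneg u hu0)]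
      have h1 : 1 - Real.exp (-u) ≤ 1 := by linarith [Real.exp_pos (-u)]
      calc g u ≤ 1 * u ^ (-1-α) := mul_le_mul_of_nonneg_right h1 (Real.rpow_nonneg hu0.le _)
        _ = u ^ (-1-α) := one_mul _
  set C : ℝ := ∫ u in Ioi (0:ℝ), g u with hC
  have hg_ae : 0 ≤ᵐ[volume.restrict (Ioi (0:ℝ))] g :=
    (ae_restrict_iff' measurableSet_Ioi).mpr (ae_of_all _ hg_nonneg)
  have hCpos : 0 < C := by
    set c0 : ℝ := (1 - Real.exp (-1)) * 2 ^ (-1-α) with hc0def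
    have hexp1 : Real.exp (-1:ℝ) < 1 := by
      have := Real.exp_lt_exp.mpr (show (-1:ℝ) < 0 by norm_num)
      rwa [Real.exp_zero] at this
    have hc0 : 0 < c0 := mul_pos (by linarith) (Real.rpow_pos_of_pos two_pos _)
    have hIoc : IntegrableOn g (Ioc (1:ℝ) 2) :=
      hgi.mono_set (fun u hu => lt_trans one_pos hu.1)
    have hbound : ∀ u ∈ Ioc (1:ℝ) 2, c0 ≤ g u := by
      intro u hu
      have hu0 : (0:ℝ) < u := lt_trans one_pos hu.1
      have h1 : 1 - Real.exp (-1) ≤ 1 - Real.exp (-u) := by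
        have := Real.exp_le_exp.mpr (show -u ≤ (-1:ℝ) by linarith [hu.1])
        linarith
      have h2 : (2:ℝ) ^ (-1-α) ≤ u ^ (-1-α) :=
        Real.rpow_le_rpow_of_nonpos hu0 hu.2 (by linarith)
      exact mul_le_mul h1 h2 (Real.rpow_nonneg two_pos.le _) (by linarith [hexp1])
    have hge := setIntegral_ge_of_const_le (c := c0) measurableSet_Ioc
      (by simp) hbound hIoc
    have hmono : ∫ u in Ioc (1:ℝ) 2, g u ≤ C :=
      setIntegral_mono_set hgi hg_ae
        (HasSubset.Subset.eventuallyLE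
          (show Ioc (1:ℝ) 2 ⊆ Ioi 0 from fun u hu => lt_trans one_pos hu.1))
    have hvol : (volume (Ioc (1:ℝ) 2)).toReal = 1 := by
      rw [Real.volume_Ioc]
      norm_num
    rw [measureReal_def, hvol, one_smul] at hge
    linarith
  refine ⟨C, hCpos, fun t ht => ?_⟩
  rcases eq_or_lt_of_le ht with ht0 | htpos
  · have hzero : (fun s : ℝ => (1 - Real.exp (-(s * t))) * s ^ (-1 - α)) = fun _ => (0:ℝ) := by
      funext s; rw [← ht0]; simp
    rw [hzero, ← ht0, Real.zero_rpow hα0.ne']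
    exact ⟨(integrableOn_const_iff).mpr (Or.inl (by simp)), by simp⟩
  · have hcomp : IntegrableOn (fun s => g (t * s)) (Ioi (0:ℝ)) := by
      have h3 := (integrableOn_Ioi_comp_mul_left_iff g 0 htpos).mpr (by simpa [mul_zero] using hgi)
      simpa [mul_zero] using h3
    have heq : EqOn (fun s : ℝ => t ^ ((1:ℝ)+α) * g (t * s))
        (fun s : ℝ => (1 - Real.exp (-(s * t))) * s ^ (-1 - α)) (Ioi 0) := by
      intro s hs
      have hs0 : (0:ℝ) < s := hs
      have hts : t ^ ((1:ℝ)+α) * (t ^ (-1-α) * s ^ (-1-α)) = s ^ (-1-α) := by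
        rw [← mul_assoc, ← Real.rpow_add htpos]
        norm_num
      dsimp only
      rw [hg]
      dsimp only
      rw [Real.mul_rpow htpos.le hs0.le, mul_comm t s]
      calc t ^ ((1:ℝ)+α) * ((1 - Real.exp (-(s * t))) * (t ^ (-1-α) * s ^ (-1-α)))
          = (1 - Real.exp (-(s * t))) * (t ^ ((1:ℝ)+α) * (t ^ (-1-α) * s ^ (-1-α))) := by ring
        _ = (1 - Real.exp (-(s * t))) * s ^ (-1-α) := by rw [hts]
    have hint2 : IntegrableOn (fun s : ℝ => (1 - Real.exp (-(s * t))) * s ^ (-1 - α))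
        (Ioi (0:ℝ)) :=
      MeasureTheory.IntegrableOn.congr_fun (hcomp.const_mul (t ^ ((1:ℝ)+α)))
        heq measurableSet_Ioi
    refine ⟨hint2, ?_⟩
    have hswap : ∫ s in Ioi (0:ℝ), (1 - Real.exp (-(s * t))) * s ^ (-1-α)
        = ∫ s in Ioi (0:ℝ), t ^ ((1:ℝ)+α) * g (t * s) :=
      (setIntegral_congr_fun measurableSet_Ioi heq).symm
    rw [show (-1 - α) = (-1-α) by norm_num] at *
    rw [hswap, integral_const_mul, integral_comp_mul_left_Ioi g 0 htpos, mul_zero, smul_eq_mul,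
      ← hC]
    rw [← mul_assoc]
    congr 1
    rw [show t⁻¹ = t ^ (-1:ℝ) by rw [Real.rpow_neg_one], ← Real.rpow_add htpos]
    norm_num

open MeasureTheory Set Filter Topology in
lemma strict_main {X : Type*} [MetricSpace X] {p : ℝ} (hp : 0 < p) (h : HasNegType X p)
    {q : ℝ} (hq0 : 0 < q) (hqp : q < p) {k : ℕ} (hk : 2 ≤ k) (x : Fin k → X)
    (hx : Function.Injective x) (η : Fin k → ℝ) (hsum : (∑ i, η i) = 0) (hne : η ≠ 0) :
    (∑ i, ∑ j, negKer q (x i) (x j) * η i * η j) < 0 := by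
  set α : ℝ := q / p with hα
  have hα0 : 0 < α := div_pos hq0 hp
  have hα1 : α < 1 := (div_lt_one hp).mpr hqp
  obtain ⟨C, hC, hrep⟩ := rep_exists hα0 hα1
  set D : Fin k → Fin k → ℝ := fun i j => dist (x i) (x j) ^ p with hD
  have hDnn : ∀ i j, 0 ≤ D i j := fun i j => Real.rpow_nonneg dist_nonneg _
  have hkerD : ∀ i j, negKer q (x i) (x j) = D i j ^ α := by
    intro i j
    rw [negKer_eq_rpow hq0.ne', hD]
    dsimp only
    rw [← Real.rpow_mul dist_nonneg]
    congr 1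
    rw [hα]; field_simp
  set f : Fin k → Fin k → ℝ → ℝ := fun i j s => (1 - Real.exp (-(s * D i j))) * s ^ (-1 - α)
    with hf
  have hfint : ∀ i j, IntegrableOn (fun s => f i j s * (η i * η j)) (Ioi (0:ℝ)) :=
    fun i j => ((hrep (D i j) (hDnn i j)).1.mul_const _)
  have hval : ∀ i j, negKer q (x i) (x j) * η i * η j
      = C⁻¹ * ∫ s in Ioi (0:ℝ), f i j s * (η i * η j) := by
    intro i j
    rw [MeasureTheory.integral_mul_const, (hrep (D i j) (hDnn i j)).2, hkerD]
    field_simp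
  set G : ℝ → ℝ := fun s => ∑ i, ∑ j, η i * η j * Real.exp (-(s * D i j)) with hG
  have hGnn : ∀ s ∈ Ioi (0:ℝ), 0 ≤ G s := fun s hs =>
    schoenberg_nonneg hp h hk x hx (le_of_lt hs) η
  have hsumint : ∑ i, ∑ j, negKer q (x i) (x j) * η i * η j
      = C⁻¹ * ∫ s in Ioi (0:ℝ), ∑ i, ∑ j, f i j s * (η i * η j) := by
    rw [integral_finset_sum _ (fun i _ => integrable_finset_sum _ (fun j _ => hfint i j)),
      Finset.mul_sum]
    refine Finset.sum_congr rfl fun i _ => ?_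
    rw [integral_finset_sum _ (fun j _ => hfint i j), Finset.mul_sum]
    exact Finset.sum_congr rfl fun j _ => hval i j
  have hptwise : ∀ s : ℝ, ∑ i, ∑ j, f i j s * (η i * η j) = -(s ^ (-1-α) * G s) := by
    intro s
    have expand : ∀ i j, f i j s * (η i * η j)
        = s ^ (-1-α) * (η i * η j) - s ^ (-1-α) * (η i * η j * Real.exp (-(s * D i j))) := by
      intro i j; rw [hf]; dsimp only; ring
    rw [Finset.sum_congr rfl fun i _ => Finset.sum_congr rfl fun j _ => expand i j]
    simp only [Finset.sum_sub_distrib, ← Finset.mul_sum]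
    have hz : ∑ i : Fin k, η i * ∑ j : Fin k, η j = 0 := by
      rw [hsum]
      simp
    rw [hz, mul_zero, zero_sub]
  have hIint : IntegrableOn (fun s => s ^ (-1-α) * G s) (Ioi (0:ℝ)) := by
    have h1 : IntegrableOn (fun s => ∑ i, ∑ j, f i j s * (η i * η j)) (Ioi (0:ℝ)) :=
      integrable_finset_sum _ (fun i _ => integrable_finset_sum _ (fun j _ => hfint i j))
    have h2 : IntegrableOn (fun s => -∑ i, ∑ j, f i j s * (η i * η j)) (Ioi (0:ℝ)) := h1.neg
    have h3 : (fun s => -∑ i, ∑ j, f i j s * (η i * η j)) = fun s => s ^ (-1-α) * G s := by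
      funext s; rw [hptwise s, neg_neg]
    rwa [h3] at h2
  -- positivity of the integral
  set E : ℝ := ∑ i, η i ^ 2 with hE
  have hEpos : 0 < E := by
    obtain ⟨i, hi⟩ := Function.ne_iff.mp hne
    exact Finset.sum_pos' (fun i _ => sq_nonneg _) ⟨i, Finset.mem_univ i,
      lt_of_le_of_ne (sq_nonneg _) (Ne.symm (pow_ne_zero 2 hi))⟩
  have hGlim : Tendsto G atTop (𝓝 E) := by
    have hEeq : E = ∑ i, ∑ j, (if i = j then η i * η j else 0) := by
      rw [hE]
      refine Finset.sum_congr rfl fun i _ => ?_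
      rw [Finset.sum_ite_eq]
      simp [sq]
    rw [hEeq, hG]
    refine tendsto_finset_sum _ fun i _ => tendsto_finset_sum _ fun j _ => ?_
    by_cases hij : i = j
    · subst hij
      have hDii : D i i = 0 := by
        rw [hD]; simp [Real.zero_rpow hp.ne']
      simp only [hDii, mul_zero, neg_zero, Real.exp_zero, mul_one, if_pos rfl]
      exact tendsto_const_nhds
    · have hDpos : 0 < D i j := by
        rw [hD]
        exact Real.rpow_pos_of_pos (dist_pos.mpr (fun hcon => hij (hx hcon))) _
      have h1 : Tendsto (fun s : ℝ => -(s * D i j)) atTop atBot :=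
        tendsto_neg_atTop_atBot.comp (Tendsto.atTop_mul_const hDpos tendsto_id)
      have h2 : Tendsto (fun s : ℝ => Real.exp (-(s * D i j))) atTop (𝓝 0) :=
        Real.tendsto_exp_atBot.comp h1
      have h3 := h2.const_mul (η i * η j)
      rw [mul_zero] at h3
      simpa [hij] using h3
  obtain ⟨M, hM⟩ := Filter.eventually_atTop.mp (hGlim.eventually_const_lt (by linarith : E/2 < E))
  set N : ℝ := max M 1 with hN
  have hN1 : (1:ℝ) ≤ N := le_max_right _ _
  have hN0 : (0:ℝ) < N := lt_of_lt_of_le one_pos hN1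
  set c1 : ℝ := (N+1) ^ (-1-α) * (E/2) with hc1
  have hc1pos : 0 < c1 := mul_pos (Real.rpow_pos_of_pos (by linarith) _) (by linarith)
  have hbound : ∀ s ∈ Ioc N (N+1), c1 ≤ s ^ (-1-α) * G s := by
    intro s hs
    have hs0 : 0 < s := lt_trans hN0 hs.1
    have h1 : (N+1) ^ (-1-α) ≤ s ^ (-1-α) :=
      Real.rpow_le_rpow_of_nonpos hs0 hs.2 (by linarith)
    have h2 : E/2 ≤ G s := le_of_lt (hM s (le_trans (le_max_left _ _) (le_of_lt hs.1)))
    exact mul_le_mul h1 h2 (by linarith) (Real.rpow_nonneg hs0.le _)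
  have hsubset : Ioc N (N+1) ⊆ Ioi (0:ℝ) := fun s hs => lt_trans hN0 hs.1
  have hge := setIntegral_ge_of_const_le (c := c1) measurableSet_Ioc (by simp)
    hbound (hIint.mono_set hsubset)
  have hvol : (volume (Ioc N (N+1))).toReal = 1 := by
    rw [Real.volume_Ioc]
    simp
  rw [measureReal_def, hvol, one_smul] at hge
  have hmono : ∫ s in Ioc N (N+1), s ^ (-1-α) * G s ≤ ∫ s in Ioi (0:ℝ), s ^ (-1-α) * G s := by
    refine setIntegral_mono_set hIint ?_ (HasSubset.Subset.eventuallyLE hsubset)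
    refine (ae_restrict_iff' measurableSet_Ioi).mpr (ae_of_all _ fun s hs => ?_)
    exact mul_nonneg (Real.rpow_nonneg (le_of_lt hs) _) (hGnn s hs)
  have hIpos : 0 < ∫ s in Ioi (0:ℝ), s ^ (-1-α) * G s := lt_of_lt_of_le hc1pos
    (le_trans hge hmono)
  rw [hsumint]
  have hfin : ∫ s in Ioi (0:ℝ), ∑ i, ∑ j, f i j s * (η i * η j)
      = -∫ s in Ioi (0:ℝ), s ^ (-1-α) * G s := by
    rw [← integral_neg]
    exact setIntegral_congr_fun measurableSet_Ioi fun s _ => hptwise s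
  rw [hfin]
  exact mul_neg_of_pos_of_neg (inv_pos.mpr hC) (neg_lt_zero.mpr hIpos)

/-- If a metric space has `p`-negative type for some `p > 0`, then it has
strict `q`-negative type for every `0 ≤ q < p`. -/
theorem strictNegType_of_lt {X : Type*} [MetricSpace X] (p : ℝ) (hp : 0 < p)
    (h : HasNegType X p) :
    ∀ q : ℝ, 0 ≤ q → q < p → HasStrictNegType X q := by
  intro q hq0 hqp
  have strict : ∀ (k : ℕ), 2 ≤ k → ∀ (x : Fin k → X), Function.Injective x →
      ∀ (η : Fin k → ℝ), (∑ i, η i) = 0 → η ≠ 0 →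
        (∑ i, ∑ j, negKer q (x i) (x j) * η i * η j) < 0 := by
    intro k hk x hx η hs hne
    rcases eq_or_lt_of_le hq0 with hq | hq
    · have hker : ∀ i j : Fin k, negKer q (x i) (x j) * η i * η j
          = η i * η j - (if i = j then η i * η j else 0) := by
        intro i j
        by_cases hij : i = j
        · subst hij
          simp [negKer]
        · have hxij : x i ≠ x j := fun hcon => hij (hx hcon)
          rw [if_neg hij]
          unfold negKer
          rw [if_neg hxij, ← hq, Real.rpow_zero]
          ring
      rw [Finset.sum_congr rfl fun i _ => Finset.sum_congr rfl fun j _ => hker i j]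
      simp only [Finset.sum_sub_distrib, Finset.sum_ite_eq, Finset.mem_univ, if_true]
      have h1 : ∑ i : Fin k, ∑ j : Fin k, η i * η j = 0 := by
        simp only [← Finset.mul_sum]
        rw [hs]
        simp
      have h2 : 0 < ∑ i : Fin k, η i * η i := by
        obtain ⟨i, hi⟩ := Function.ne_iff.mp hne
        exact Finset.sum_pos' (fun i _ => mul_self_nonneg _)
          ⟨i, Finset.mem_univ i, lt_of_le_of_ne (mul_self_nonneg _)
            (Ne.symm (mul_ne_zero hi hi))⟩
      linarith
    · exact strict_main hp h hq hqp hk x hx η hs hne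
  refine ⟨fun k hk x hx η hs => ?_, strict⟩
  by_cases hη : η = 0
  · subst hη
    simp
  · exact le_of_lt (strict k hk x hx η hs hη)
end

section
/- For every ℘ > 0 there exists a metric space (X,d) such that (X,d) has strict p-negative type if and only if p ∈ [0,℘]. In particular, the supremal p-negative type of an infinite metric space can be strict. -/
open scoped BigOperators

namespace StrictAux

/-- The underlying type: `m` "left" points and infinitely many "right" points. -/
abbrev X (m : ℕ) : Type := Fin m ⊕ ℕ

/-- Two-valued distance: `c` within a side, `1` across sides. -/
def d (m : ℕ) (c : ℝ) (x y : X m) : ℝ :=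
  if x = y then 0 else if x.isLeft = y.isLeft then c else 1

lemma d_nonneg {m : ℕ} {c : ℝ} (hc : 0 ≤ c) (x y : X m) : 0 ≤ d m c x y := by
  unfold d; split
  · exact le_refl 0
  · split
    · exact hc
    · exact zero_le_one

lemma d_le_two {m : ℕ} {c : ℝ} (hc : c ≤ 2) (x y : X m) : d m c x y ≤ 2 := by
  unfold d; split
  · norm_num
  · split
    · exact hc
    · norm_num

lemma one_le_d {m : ℕ} {c : ℝ} (hc : 1 ≤ c) {x y : X m} (h : x ≠ y) : 1 ≤ d m c x y := by
  unfold d; rw [if_neg h]; split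
  · exact hc
  · exact le_refl 1

noncomputable def met (m : ℕ) (c : ℝ) (hc1 : 1 ≤ c) (hc2 : c ≤ 2) : MetricSpace (X m) where
  dist := d m c
  dist_self x := if_pos rfl
  dist_comm x y := by
    show d m c x y = d m c y x
    unfold d
    rcases eq_or_ne x y with rfl | h
    · simp
    · rw [if_neg h, if_neg (Ne.symm h)]
      by_cases hs : x.isLeft = y.isLeft
      · rw [if_pos hs, if_pos hs.symm]
      · rw [if_neg hs, if_neg (Ne.symm hs)]
  dist_triangle x y z := by
    show d m c x z ≤ d m c x y + d m c y z
    have h0 : (0:ℝ) ≤ c := le_trans zero_le_one hc1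
    rcases eq_or_ne y x with rfl | hyx
    · have : d m c y y = 0 := if_pos rfl
      rw [this, zero_add]
    rcases eq_or_ne y z with rfl | hyz
    · have : d m c y y = 0 := if_pos rfl
      rw [this, add_zero]
    calc d m c x z ≤ 2 := d_le_two hc2 x z
      _ = 1 + 1 := by norm_num
      _ ≤ d m c x y + d m c y z := by
          have h1 := one_le_d hc1 (Ne.symm hyx)
          have h2 := one_le_d hc1 hyz
          linarith
  eq_of_dist_eq_zero := by
    intro x y h
    replace h : d m c x y = 0 := h
    by_contra hne
    have := one_le_d (m := m) hc1 hne
    rw [h] at this; linarith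

section Main

variable {m : ℕ} {c : ℝ}

/-- The key quadratic form identity. -/
lemma key [MetricSpace (X m)] (hd : ∀ u v : X m, dist u v = d m c u v)
    (p : ℝ) {k : ℕ} (x : Fin k → X m) (hx : Function.Injective x)
    (η a b : Fin k → ℝ)
    (ha : ∀ i, a i = if (x i).isLeft then η i else 0)
    (hb : ∀ i, b i = if (x i).isLeft then 0 else η i)
    (hη : (∑ i, η i) = 0) :
    (∑ i, ∑ j, negKer p (x i) (x j) * η i * η j)
      = (2 * c ^ p - 2) * (∑ i, a i) ^ 2 - c ^ p * ∑ i, η i ^ 2 := by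
  have hab : ∀ i, a i + b i = η i := by
    intro i; rw [ha, hb]; cases (x i).isLeft <;> simp
  have hB : (∑ i, b i) = -(∑ i, a i) := by
    have h1 : (∑ i, (a i + b i)) = 0 := by
      rw [Finset.sum_congr rfl fun i _ => hab i, hη]
    rw [Finset.sum_add_distrib] at h1
    linarith
  have point : ∀ i j, negKer p (x i) (x j) * η i * η j
      = c ^ p * (a i * a j) + c ^ p * (b i * b j) + (a i * b j + b i * a j)
        - (if i = j then c ^ p * η i ^ 2 else 0) := by
    intro i j
    rcases eq_or_ne i j with rfl | hij
    · have hK : negKer p (x i) (x i) = 0 := if_pos rfl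
      rw [hK, if_pos rfl]
      cases hl : (x i).isLeft <;> simp [ha, hb, hl] <;> ring
    · have hxy : x i ≠ x j := fun h => hij (hx h)
      have hK : negKer p (x i) (x j) = dist (x i) (x j) ^ p := if_neg hxy
      rw [hK, hd, if_neg hij]
      unfold d
      rw [if_neg hxy]
      by_cases hss : (x i).isLeft = (x j).isLeft
      · rw [if_pos hss]
        cases hl : (x i).isLeft <;>
          · rw [hl] at hss
            simp [ha, hb, hl, ← hss] <;> ring
      · rw [if_neg hss, Real.one_rpow]
        cases hl : (x i).isLeft <;>
          · rw [hl] at hss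
            have hl2 : (x j).isLeft = !(x i).isLeft := by
              rw [hl]; revert hss; cases (x j).isLeft <;> simp
            rw [hl] at hl2
            simp [ha, hb, hl, hl2] <;> ring
  calc (∑ i, ∑ j, negKer p (x i) (x j) * η i * η j)
      = ∑ i, ∑ j, (c ^ p * (a i * a j) + c ^ p * (b i * b j) + (a i * b j + b i * a j)
          - (if i = j then c ^ p * η i ^ 2 else 0)) :=
        Finset.sum_congr rfl fun i _ => Finset.sum_congr rfl fun j _ => point i j
    _ = c ^ p * ((∑ i, a i) * (∑ i, a i)) + c ^ p * ((∑ i, b i) * (∑ i, b i))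
          + ((∑ i, a i) * (∑ i, b i) + (∑ i, b i) * (∑ i, a i))
          - c ^ p * (∑ i, η i ^ 2) := by
        simp only [Finset.sum_add_distrib, Finset.sum_sub_distrib, ← Finset.mul_sum,
          ← Finset.sum_mul, Finset.sum_ite_eq, Finset.mem_univ, if_true]
    _ = (2 * c ^ p - 2) * (∑ i, a i) ^ 2 - c ^ p * ∑ i, η i ^ 2 := by
        rw [hB]; ring

lemma strict_core [MetricSpace (X m)] (hd : ∀ u v : X m, dist u v = d m c u v)
    (hm : 1 ≤ m) (hc0 : 0 < c) (p : ℝ)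
    (hK : c ^ p * (2 - 1/(m:ℝ)) ≤ 2) {k : ℕ} (x : Fin k → X m)
    (hx : Function.Injective x) (η : Fin k → ℝ) (hη : (∑ i, η i) = 0) (hne : η ≠ 0) :
    (∑ i, ∑ j, negKer p (x i) (x j) * η i * η j) < 0 := by
  classical
  set P := c ^ p with hP
  have hP0 : 0 < P := Real.rpow_pos_of_pos hc0 p
  have hm0 : (0:ℝ) < (m:ℝ) := by exact_mod_cast hm
  set a : Fin k → ℝ := fun i => if (x i).isLeft then η i else 0 with ha
  set b : Fin k → ℝ := fun i => if (x i).isLeft then 0 else η i with hb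
  have hkey := key hd p x hx η a b (fun i => rfl) (fun i => rfl) hη
  set S := ∑ i, a i with hS
  set TA := ∑ i, a i ^ 2 with hTA
  set TB := ∑ i, b i ^ 2 with hTB
  have hTAnn : 0 ≤ TA := Finset.sum_nonneg fun i _ => sq_nonneg _
  have hTBnn : 0 ≤ TB := Finset.sum_nonneg fun i _ => sq_nonneg _
  have hT : (∑ i, η i ^ 2) = TA + TB := by
    rw [hTA, hTB, ← Finset.sum_add_distrib]
    refine Finset.sum_congr rfl fun i _ => ?_
    by_cases h : (x i).isLeft <;> simp [ha, hb, h]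
  -- Cauchy-Schwarz on the left side
  have hCS : S ^ 2 ≤ (m:ℝ) * TA := by
    set s : Finset (Fin k) := Finset.univ.filter (fun i => (x i).isLeft) with hs
    have h1 : S = ∑ i ∈ s, η i := by
      rw [hS, hs, Finset.sum_filter]
    have h2 : TA = ∑ i ∈ s, η i ^ 2 := by
      rw [hTA, hs, Finset.sum_filter]
      refine Finset.sum_congr rfl fun i _ => ?_
      by_cases h : (x i).isLeft <;> simp [ha, h]
    have hcard : (s.card : ℝ) ≤ (m:ℝ) := by
      have : s.card ≤ (Finset.univ : Finset (Fin m)).card := by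
        apply Finset.card_le_card_of_injOn
          (fun i => Sum.elim id (fun _ => (⟨0, hm⟩ : Fin m)) (x i))
        · intro i _; exact Finset.mem_univ _
        · intro i hi j hj hij
          simp only [hs, Finset.coe_filter, Finset.mem_univ, true_and, Set.mem_setOf_eq] at hi hj
          obtain ⟨u, hu⟩ := Sum.isLeft_iff.mp hi
          obtain ⟨v, hv⟩ := Sum.isLeft_iff.mp hj
          apply hx
          have huv : u = v := by simpa [hu, hv] using hij
          rw [hu, hv, huv]
      simpa using (Nat.cast_le (α := ℝ)).mpr this
    calc S ^ 2 = (∑ i ∈ s, η i) ^ 2 := by rw [h1]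
      _ ≤ (s.card : ℝ) * ∑ i ∈ s, η i ^ 2 := sq_sum_le_card_mul_sum_sq
      _ ≤ (m:ℝ) * ∑ i ∈ s, η i ^ 2 := by
          apply mul_le_mul_of_nonneg_right hcard
          exact Finset.sum_nonneg fun i _ => sq_nonneg _
      _ = (m:ℝ) * TA := by rw [h2]
  have hcoef : 2 * P - 2 ≤ P / (m:ℝ) := by
    have : P * (2 - 1/(m:ℝ)) = 2 * P - P / (m:ℝ) := by ring
    rw [this] at hK
    linarith
  have h3 : (2 * P - 2) * S ^ 2 ≤ P * TA := by
    calc (2 * P - 2) * S ^ 2 ≤ (P / (m:ℝ)) * S ^ 2 :=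
          mul_le_mul_of_nonneg_right hcoef (sq_nonneg S)
      _ ≤ (P / (m:ℝ)) * ((m:ℝ) * TA) := by
          apply mul_le_mul_of_nonneg_left hCS
          positivity
      _ = P * TA := by field_simp
  rw [hkey, hT]
  by_cases hbz : ∀ i, b i = 0
  · -- weights supported on the left part; then S = 0 and some η i ≠ 0
    have hab : ∀ i, a i = η i := by
      intro i
      by_cases h : (x i).isLeft
      · simp [ha, h]
      · have hb0 := hbz i
        simp only [hb, if_neg h] at hb0
        simp [ha, h, hb0]
    have hS0 : S = 0 := by
      rw [hS]
      rw [Finset.sum_congr rfl fun i _ => hab i]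
      exact hη
    obtain ⟨i, hi⟩ := Function.ne_iff.mp hne
    have hTpos : 0 < TA + TB := by
      have h1 : 0 < η i ^ 2 := sq_pos_of_ne_zero hi
      have h2 : η i ^ 2 ≤ ∑ j, η j ^ 2 :=
        Finset.single_le_sum (fun j _ => sq_nonneg (η j)) (Finset.mem_univ i)
      rw [hT] at h2
      linarith
    rw [hS0]
    nlinarith [mul_pos hP0 hTpos]
  · push_neg at hbz
    obtain ⟨i, hi⟩ := hbz
    have hTBpos : 0 < TB := by
      have h1 : 0 < b i ^ 2 := sq_pos_of_ne_zero hi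
      have h2 : b i ^ 2 ≤ TB :=
        Finset.single_le_sum (fun j _ => sq_nonneg (b j)) (Finset.mem_univ i)
      linarith
    nlinarith [mul_pos hP0 hTBpos]


lemma not_negType [MetricSpace (X m)] (hd : ∀ u v : X m, dist u v = d m c u v)
    (hm : 1 ≤ m) (hc0 : 0 < c) (p : ℝ)
    (hK : 2 < c ^ p * (2 - 1/(m:ℝ))) : ¬ HasNegType (X m) p := by
  intro H
  set P := c ^ p with hP
  have hP0 : 0 < P := Real.rpow_pos_of_pos hc0 p
  have hm0 : (0:ℝ) < (m:ℝ) := by exact_mod_cast hm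
  have hmne : (m:ℝ) ≠ 0 := ne_of_gt hm0
  set δ := P * (2 - 1/(m:ℝ)) - 2 with hδ
  have hδ0 : 0 < δ := by rw [hδ]; linarith
  obtain ⟨n, hn⟩ := exists_nat_gt (P / δ)
  have hn0 : (0:ℝ) < (n:ℝ) := lt_trans (div_pos hP0 hδ0) hn
  have hnne : (n:ℝ) ≠ 0 := ne_of_gt hn0
  have hn1 : 1 ≤ n := by
    have : 0 < n := by exact_mod_cast hn0
    omega
  have hPn : P / (n:ℝ) < δ := by
    rw [div_lt_iff₀ hn0]
    have := (div_lt_iff₀ hδ0).mp hn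
    nlinarith
  set e := (finSumFinEquiv (m := m) (n := n)) with he
  have hmapinj : Function.Injective (Sum.map (id : Fin m → Fin m) (Fin.val : Fin n → ℕ)) :=
    Function.Injective.sumMap Function.injective_id Fin.val_injective
  set x : Fin (m + n) → X m := fun i => Sum.map id Fin.val (e.symm i) with hxdef
  have hx : Function.Injective x := hmapinj.comp e.symm.injective
  set η : Fin (m + n) → ℝ :=
    fun i => Sum.elim (fun _ => 1/(m:ℝ)) (fun _ => -(1/(n:ℝ))) (e.symm i) with hηdef
  have sum_comp : ∀ F : (Fin m ⊕ Fin n) → ℝ,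
      (∑ i, F (e.symm i)) = (∑ _u : Fin m, F (Sum.inl _u)) + ∑ _v : Fin n, F (Sum.inr _v) := by
    intro F
    rw [Equiv.sum_comp e.symm F, Fintype.sum_sum_type]
  have hηsum : (∑ i, η i) = 0 := by
    calc (∑ i, η i)
        = (∑ _u : Fin m, 1/(m:ℝ)) + ∑ _v : Fin n, -(1/(n:ℝ)) := sum_comp _
      _ = 0 := by
          simp only [Finset.sum_const, Finset.card_univ, Fintype.card_fin, nsmul_eq_mul]
          field_simp; norm_num
  set a : Fin (m + n) → ℝ := fun i => if (x i).isLeft then η i else 0 with ha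
  set b : Fin (m + n) → ℝ := fun i => if (x i).isLeft then 0 else η i with hb
  have hkey := key hd p x hx η a b (fun i => rfl) (fun i => rfl) hηsum
  have hA : (∑ i, a i) = 1 := by
    have hpt : ∀ i, a i = Sum.elim (fun _ => 1/(m:ℝ)) (fun _ => (0:ℝ)) (e.symm i) := by
      intro i
      cases h : e.symm i with
      | inl u => simp [ha, hxdef, h, hηdef]
      | inr v => simp [ha, hxdef, h]
    calc (∑ i, a i)
        = ∑ i, Sum.elim (fun _ => 1/(m:ℝ)) (fun _ => (0:ℝ)) (e.symm i) :=
          Finset.sum_congr rfl fun i _ => hpt i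
      _ = (∑ _u : Fin m, 1/(m:ℝ)) + ∑ _v : Fin n, (0:ℝ) := sum_comp _
      _ = 1 := by
          simp only [Finset.sum_const, Finset.card_univ, Fintype.card_fin, nsmul_eq_mul,
            Finset.sum_const_zero, add_zero]
          field_simp; simp
  have hT : (∑ i, η i ^ 2) = 1/(m:ℝ) + 1/(n:ℝ) := by
    have hpt : ∀ i, η i ^ 2
        = Sum.elim (fun _ => (1/(m:ℝ))^2) (fun _ => (1/(n:ℝ))^2) (e.symm i) := by
      intro i
      cases h : e.symm i with
      | inl u => simp [hηdef, h]
      | inr v => simp [hηdef, h]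
    calc (∑ i, η i ^ 2)
        = ∑ i, Sum.elim (fun _ => (1/(m:ℝ))^2) (fun _ => (1/(n:ℝ))^2) (e.symm i) :=
          Finset.sum_congr rfl fun i _ => hpt i
      _ = (∑ _u : Fin m, (1/(m:ℝ))^2) + ∑ _v : Fin n, (1/(n:ℝ))^2 := sum_comp _
      _ = 1/(m:ℝ) + 1/(n:ℝ) := by
          simp only [Finset.sum_const, Finset.card_univ, Fintype.card_fin, nsmul_eq_mul]
          field_simp
  have hQ := H (m + n) (by omega) x hx η hηsum
  rw [hkey, hA, hT] at hQ
  have e1 : P * (1/(m:ℝ) + 1/(n:ℝ)) = P/(m:ℝ) + P/(n:ℝ) := by ring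
  have e2 : δ = 2*P - P/(m:ℝ) - 2 := by rw [hδ]; ring
  have : (0:ℝ) < (2 * P - 2) * 1 ^ 2 - P * (1/(m:ℝ) + 1/(n:ℝ)) := by
    rw [e1, one_pow, mul_one]
    linarith
  linarith

end Main

end StrictAux

/-- For every `℘ > 0` there is an (infinite) metric space having strict
`p`-negative type exactly for `p ∈ [0,℘]`; in particular the supremal
negative type of an infinite metric space can be strict. -/
theorem exists_metricSpace_strictNegType_Icc (℘ : ℝ) (h℘ : 0 < ℘) :
    ∃ (X : Type) (_ : MetricSpace X), Infinite X ∧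
      ∀ p : ℝ, 0 ≤ p → (HasStrictNegType X p ↔ p ≤ ℘) := by
  have ht1 : 1 < (2:ℝ) ^ ℘ := by
    rw [show (1:ℝ) = (2:ℝ) ^ (0:ℝ) by simp]
    exact Real.rpow_lt_rpow_left_iff one_lt_two |>.mpr h℘
  set t := (2:ℝ) ^ ℘ with ht
  obtain ⟨N, hN⟩ := exists_nat_gt (1/(t-1))
  set m := N + 1 with hmdef
  have hm : 1 ≤ m := by omega
  have hm0 : (0:ℝ) < (m:ℝ) := by exact_mod_cast Nat.succ_pos N
  have hmR : (1:ℝ) ≤ (m:ℝ) := by exact_mod_cast hm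
  have hr1 : (1:ℝ) ≤ 2 - 1/(m:ℝ) := by
    have : 1/(m:ℝ) ≤ 1 := by rw [div_le_one hm0]; exact hmR
    linarith
  have hr2 : 2 - 1/(m:ℝ) < 2 := by
    have : 0 < 1/(m:ℝ) := by positivity
    linarith
  have hr0 : (0:ℝ) < 2 - 1/(m:ℝ) := by linarith
  have hdiv1 : 1 < 2/(2 - 1/(m:ℝ)) := (one_lt_div hr0).mpr hr2
  have hkey2 : 2/(2 - 1/(m:ℝ)) ≤ t := by
    rw [div_le_iff₀ hr0]
    have hNm : 1/(t-1) < (m:ℝ) := by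
      refine lt_of_lt_of_le hN ?_
      exact_mod_cast Nat.le_succ N
    have ht0 : 0 < t - 1 := by linarith
    have h1 : 1 < (m:ℝ)*(t-1) := by
      rw [div_lt_iff₀ ht0] at hNm
      linarith
    have heq : t * (2 - 1/(m:ℝ)) = 2*t - t/(m:ℝ) := by ring
    rw [heq]
    have h4 : t/(m:ℝ) ≤ 2*t - 2 := by
      rw [div_le_iff₀ hm0]
      nlinarith
    linarith
  set c := (2/(2 - 1/(m:ℝ))) ^ (℘⁻¹) with hc
  have hdr0 : (0:ℝ) < 2/(2 - 1/(m:ℝ)) := by positivity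
  have hc℘ : c ^ ℘ = 2/(2 - 1/(m:ℝ)) := Real.rpow_inv_rpow hdr0.le (ne_of_gt h℘)
  have hc1 : 1 < c := by
    rw [hc]
    exact Real.one_lt_rpow_iff_of_pos hdr0 |>.mpr (Or.inl ⟨hdiv1, by positivity⟩)
  have hc0 : 0 < c := lt_trans one_pos hc1
  have hc2 : c ≤ 2 := by
    by_contra hlt
    push_neg at hlt
    have h2 : t < c ^ ℘ := Real.rpow_lt_rpow (by norm_num) hlt h℘
    rw [hc℘] at h2
    linarith
  have hc℘r : c ^ ℘ * (2 - 1/(m:ℝ)) = 2 := by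
    rw [hc℘, div_mul_cancel₀]
    exact ne_of_gt hr0
  letI M := StrictAux.met m c hc1.le hc2
  refine ⟨StrictAux.X m, M, inferInstance, fun p hp => ?_⟩
  have hd : ∀ u v : StrictAux.X m, dist u v = StrictAux.d m c u v := fun u v => rfl
  constructor
  · intro hstrict
    by_contra hgt
    push_neg at hgt
    have hKgt : 2 < c ^ p * (2 - 1/(m:ℝ)) := by
      have h1 : c ^ ℘ < c ^ p := Real.rpow_lt_rpow_left_iff hc1 |>.mpr hgt
      nlinarith
    exact StrictAux.not_negType hd hm hc0 p hKgt hstrict.1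
  · intro hple
    have hKle : c ^ p * (2 - 1/(m:ℝ)) ≤ 2 := by
      have h1 : c ^ p ≤ c ^ ℘ := Real.rpow_le_rpow_left_iff hc1 |>.mpr hple
      nlinarith
    constructor
    · intro k hk x hx η hη
      by_cases h0 : η = 0
      · subst h0
        simp
      · exact le_of_lt (StrictAux.strict_core hd hm hc0 p hKle x hx η hη h0)
    · intro k hk x hx η hη hne
      exact StrictAux.strict_core hd hm hc0 p hKle x hx η hη hne
end

section
/- Let 1 ≤ p ≤ 2 and let μ be a positive measure. If a metric space (X,d) is isometric to a subset of L_p(μ) (real-valued L_p functions with the L_p norm distance), then (X,d) has strict q-negative type for all q ∈ [0,p). -/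
open scoped BigOperators

open MeasureTheory

section Aux

open Finset Nat Set Real

/-! ### Positive semidefiniteness machinery -/

lemma gram_pow_psd {k m : ℕ} (B : Fin m → Fin k → ℝ) (ξ : Fin k → ℝ) (n : ℕ) :
    0 ≤ ∑ i, ∑ j, ξ i * ξ j * (∑ a, B a i * B a j) ^ n := by
  have expand : ∀ i j : Fin k, (∑ a, B a i * B a j) ^ n
      = ∑ p ∈ Fintype.piFinset (fun _ : Fin n => (Finset.univ : Finset (Fin m))),
          (∏ t, B (p t) i) * (∏ t, B (p t) j) := by
    intro i j
    have h1 : (∑ a, B a i * B a j) ^ n = ∏ _t : Fin n, (∑ a, B a i * B a j) := by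
      rw [Finset.prod_const, Finset.card_univ, Fintype.card_fin]
    rw [h1, Finset.prod_univ_sum]
    apply Finset.sum_congr rfl
    intro p _
    rw [← Finset.prod_mul_distrib]
  simp_rw [expand, Finset.mul_sum]
  have swap : ∀ (i : Fin k), ∑ j, ∑ p ∈ Fintype.piFinset (fun _ : Fin n => (Finset.univ : Finset (Fin m))),
      ξ i * ξ j * ((∏ t, B (p t) i) * (∏ t, B (p t) j))
      = ∑ p ∈ Fintype.piFinset (fun _ : Fin n => (Finset.univ : Finset (Fin m))), ∑ j,
      ξ i * ξ j * ((∏ t, B (p t) i) * (∏ t, B (p t) j)) := fun i => Finset.sum_comm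
  simp_rw [swap]
  rw [Finset.sum_comm]
  apply Finset.sum_nonneg
  intro p _
  have : ∑ i, ∑ j, ξ i * ξ j * ((∏ t, B (p t) i) * (∏ t, B (p t) j))
      = (∑ i, ξ i * ∏ t, B (p t) i) ^ 2 := by
    rw [sq, Finset.sum_mul_sum]
    apply Finset.sum_congr rfl; intro i _
    apply Finset.sum_congr rfl; intro j _
    ring
  rw [this]; positivity

/-- exp of a positive semidefinite form is positive semidefinite -/
lemma exp_psd {k : ℕ} (H : Fin k → Fin k → ℝ) (hsymm : ∀ i j, H i j = H j i)
    (hpsd : ∀ ξ : Fin k → ℝ, 0 ≤ ∑ i, ∑ j, ξ i * ξ j * H i j) :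
    ∀ ξ : Fin k → ℝ, 0 ≤ ∑ i, ∑ j, ξ i * ξ j * Real.exp (H i j) := by
  intro ξ
  -- Gram decomposition
  have hps : (Matrix.of H).PosSemidef := by
    refine Matrix.PosSemidef.of_dotProduct_mulVec_nonneg ?_ ?_
    · ext i j; simpa using hsymm j i
    · intro x
      have e : dotProduct (star x) (Matrix.mulVec (Matrix.of H) x)
          = ∑ i, ∑ j, x i * x j * H i j := by
        simp only [dotProduct, Matrix.mulVec, Matrix.of_apply, star_trivial,
          Finset.mul_sum]
        apply Finset.sum_congr rfl; intro i _
        apply Finset.sum_congr rfl; intro j _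
        ring
      rw [e]; exact hpsd x
  obtain ⟨Bm, hBm⟩ : ∃ Bm : Matrix (Fin k) (Fin k) ℝ, Matrix.of H = Bm.conjTranspose * Bm := by
    open MatrixOrder in
    exact CStarAlgebra.nonneg_iff_eq_star_mul_self.mp (Matrix.nonneg_iff_posSemidef.mpr hps)
  have hG : ∀ i j, H i j = ∑ a, Bm a i * Bm a j := by
    intro i j
    have := congrFun (congrFun hBm i) j
    simpa [Matrix.mul_apply, Matrix.conjTranspose_apply] using this
  -- exp as tsum
  have hexp : ∀ i j, Real.exp (H i j) = ∑' n : ℕ, H i j ^ n / n ! := by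
    intro i j
    rw [Real.exp_eq_exp_ℝ, NormedSpace.exp_eq_tsum_div]
  simp_rw [hexp]
  have hsummable : ∀ i j : Fin k, Summable (fun n : ℕ => ξ i * ξ j * (H i j ^ n / n !)) :=
    fun i j => (Real.summable_pow_div_factorial (H i j)).mul_left _
  calc (0:ℝ) ≤ ∑' n : ℕ, ∑ i, ∑ j, ξ i * ξ j * (H i j ^ n / n !) := by
        apply tsum_nonneg
        intro n
        have e2 : ∑ i, ∑ j, ξ i * ξ j * (H i j ^ n / n !)
            = (∑ i, ∑ j, ξ i * ξ j * H i j ^ n) / n ! := by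
          rw [Finset.sum_div]
          apply Finset.sum_congr rfl; intro i _
          rw [Finset.sum_div]
          apply Finset.sum_congr rfl; intro j _; ring
        rw [e2]
        apply div_nonneg _ (by positivity)
        simp_rw [hG]
        exact gram_pow_psd Bm ξ n
    _ = ∑ i, ∑ j, ∑' n : ℕ, ξ i * ξ j * (H i j ^ n / n !) := by
        rw [Summable.tsum_finsetSum (fun i _ => summable_sum fun j _ => hsummable i j)]
        apply Finset.sum_congr rfl; intro i _
        rw [Summable.tsum_finsetSum (fun j _ => hsummable i j)]
    _ = ∑ i, ∑ j, ξ i * ξ j * ∑' n : ℕ, (H i j ^ n / n !) := by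
        apply Finset.sum_congr rfl; intro i _
        apply Finset.sum_congr rfl; intro j _
        exact tsum_mul_left

/-- Schoenberg: a symmetric negative-definite kernel vanishing on the diagonal has
positive semidefinite exponential `exp (-K)`. -/
lemma neg_exp_psd {k : ℕ} (hk : 0 < k) (K : Fin k → Fin k → ℝ)
    (hsymm : ∀ i j, K i j = K j i) (hdiag : ∀ i, K i i = 0)
    (hnd : ∀ η : Fin k → ℝ, (∑ i, η i) = 0 → ∑ i, ∑ j, η i * η j * K i j ≤ 0) :
    ∀ ξ : Fin k → ℝ, 0 ≤ ∑ i, ∑ j, ξ i * ξ j * Real.exp (-K i j) := by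
  intro ξ
  set i0 : Fin k := ⟨0, hk⟩
  set H : Fin k → Fin k → ℝ := fun i j => K i i0 + K i0 j - K i j with hH
  have hHsymm : ∀ i j, H i j = H j i := by
    intro i j; simp only [hH]; rw [hsymm i j, hsymm i i0, hsymm j i0]; ring
  have hHpsd : ∀ ζ : Fin k → ℝ, 0 ≤ ∑ i, ∑ j, ζ i * ζ j * H i j := by
    intro ζ
    set σ : ℝ := ∑ i, ζ i with hσ
    set η : Fin k → ℝ := fun i => ζ i - (if i = i0 then σ else 0) with hη
    have hsum : (∑ i, η i) = 0 := by
      simp only [hη, Finset.sum_sub_distrib, Finset.sum_ite_eq' Finset.univ i0,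
        Finset.mem_univ, if_pos, ← hσ]
      ring
    have hT := hnd η hsum
    have split : ∀ i j, η i * η j * K i j =
        ζ i * ζ j * K i j
        - (if j = i0 then ζ i * σ * K i j else 0)
        - (if i = i0 then ζ j * σ * K i j else 0)
        + (if i = i0 then (if j = i0 then σ * σ * K i j else 0) else 0) := by
      intro i j
      by_cases hi : i = i0 <;> by_cases hj : j = i0 <;> simp [hη, hi, hj] <;> ring
    have S2 : ∑ i, ∑ j, (if j = i0 then ζ i * σ * K i j else 0)
        = ∑ i, ζ i * σ * K i i0 := by
      apply Finset.sum_congr rfl; intro i _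
      simp [Finset.sum_ite_eq' Finset.univ i0]
    have S3 : ∑ i, ∑ j, (if i = i0 then ζ j * σ * K i j else 0)
        = ∑ j, ζ j * σ * K i0 j := by
      rw [Finset.sum_comm]
      apply Finset.sum_congr rfl; intro j _
      simp [Finset.sum_ite_eq' Finset.univ i0]
    have S4 : ∑ i, ∑ j, (if i = i0 then (if j = i0 then σ * σ * K i j else 0) else 0)
        = (0:ℝ) := by
      simp [Finset.sum_ite_eq' Finset.univ i0, hdiag]
    have hTeq : ∑ i, ∑ j, η i * η j * K i j
        = ∑ i, ∑ j, ζ i * ζ j * K i j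
          - (∑ i, ζ i * σ * K i i0) - (∑ j, ζ j * σ * K i0 j) := by
      simp_rw [split]
      simp only [Finset.sum_add_distrib, Finset.sum_sub_distrib]
      rw [S2, S3, S4]
      ring
    have hQH : ∑ i, ∑ j, ζ i * ζ j * H i j
        = (∑ i, ζ i * σ * K i i0) + (∑ j, ζ j * σ * K i0 j)
          - ∑ i, ∑ j, ζ i * ζ j * K i j := by
      simp only [hH]
      have e1 : ∀ i : Fin k, ∑ j, ζ i * ζ j * (K i i0 + K i0 j - K i j)
          = ζ i * σ * K i i0 + (∑ j, ζ j * ζ i * K i0 j) - ∑ j, ζ i * ζ j * K i j := by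
        intro i
        rw [hσ]
        simp only [Finset.mul_sum, Finset.sum_mul, ← Finset.sum_sub_distrib,
          ← Finset.sum_add_distrib]
        apply Finset.sum_congr rfl; intro j _; ring
      simp_rw [e1]
      simp only [Finset.sum_add_distrib, Finset.sum_sub_distrib]
      have e2 : ∑ i, ∑ j, ζ j * ζ i * K i0 j = ∑ j, ζ j * σ * K i0 j := by
        rw [Finset.sum_comm]
        refine Finset.sum_congr rfl fun j _ => ?_
        rw [← Finset.sum_mul, ← Finset.mul_sum, ← hσ]
      rw [e2]
    have : 0 ≤ -(∑ i, ∑ j, η i * η j * K i j) := by linarith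
    rw [hTeq] at this
    linarith [hQH, this]
  -- now conclude
  set ξ' : Fin k → ℝ := fun i => ξ i * Real.exp (-K i i0) with hξ'
  have key := exp_psd H hHsymm hHpsd ξ'
  have e : ∀ i j, ξ' i * ξ' j * Real.exp (H i j) = ξ i * ξ j * Real.exp (-K i j) := by
    intro i j
    have h1 : -K i j = (-K i i0) + ((-K j i0) + H i j) := by
      simp only [hH]; rw [hsymm j i0]; ring
    rw [h1, Real.exp_add, Real.exp_add]
    simp only [hξ']; ring
  calc (0:ℝ) ≤ ∑ i, ∑ j, ξ' i * ξ' j * Real.exp (H i j) := key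
    _ = ∑ i, ∑ j, ξ i * ξ j * Real.exp (-K i j) := by
        apply Finset.sum_congr rfl; intro i _
        apply Finset.sum_congr rfl; intro j _
        exact e i j

/-! ### Scaling, integrability and positivity for homogeneous kernels -/

/-- scaling of homogeneous integrals -/
lemma integral_scaling (h : ℝ → ℝ) {e : ℝ} {c : ℝ} (hc : 0 < c) :
    ∫ s in Set.Ioi (0:ℝ), h (c * s) * s ^ e
      = c ^ (-e-1) * ∫ s in Set.Ioi (0:ℝ), h s * s ^ e := by
  have base := MeasureTheory.integral_comp_mul_left_Ioi (fun s => h s * s ^ e) 0 hc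
  rw [mul_zero] at base
  have congr1 : ∫ s in Set.Ioi (0:ℝ), h (c * s) * (c * s) ^ e
      = ∫ s in Set.Ioi (0:ℝ), c ^ e * (h (c * s) * s ^ e) := by
    apply MeasureTheory.setIntegral_congr_fun measurableSet_Ioi
    intro s hs
    show h (c * s) * (c * s) ^ e = c ^ e * (h (c * s) * s ^ e)
    rw [Real.mul_rpow hc.le (le_of_lt hs)]
    ring
  have base' : c ^ e * ∫ s in Set.Ioi (0:ℝ), h (c * s) * s ^ e
      = c⁻¹ * ∫ s in Set.Ioi (0:ℝ), h s * s ^ e := by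
    rw [← MeasureTheory.integral_const_mul, ← congr1]
    simpa [smul_eq_mul] using base
  have hce : (0:ℝ) < c ^ e := Real.rpow_pos_of_pos hc e
  calc ∫ s in Set.Ioi (0:ℝ), h (c * s) * s ^ e
      = (c ^ e)⁻¹ * (c ^ e * ∫ s in Set.Ioi (0:ℝ), h (c * s) * s ^ e) := by
        field_simp
    _ = (c ^ e)⁻¹ * (c⁻¹ * ∫ s in Set.Ioi (0:ℝ), h s * s ^ e) := by rw [base']
    _ = c ^ (-e-1) * ∫ s in Set.Ioi (0:ℝ), h s * s ^ e := by
        rw [show -e-1 = -e + (-1) by ring, Real.rpow_add hc, Real.rpow_neg_one,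
          Real.rpow_neg hc.le]
        ring

/-- integrability of kernels F(s) s^(-1-β) -/
lemma integrableOn_kernel {F : ℝ → ℝ} (hcont : Continuous F) {β C M : ℝ} {m : ℕ}
    (hβ0 : 0 < β) (hβm : β < m)
    (hbound1 : ∀ s ∈ Set.Ioc (0:ℝ) 1, |F s| ≤ C * s ^ (m:ℝ))
    (hbound2 : ∀ s : ℝ, 1 ≤ s → |F s| ≤ M) :
    MeasureTheory.IntegrableOn (fun s => F s * s ^ (-1-β)) (Set.Ioi (0:ℝ)) := by
  have hmeas : ∀ t : Set ℝ, t ⊆ Set.Ioi (0:ℝ) → MeasurableSet t →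
      AEStronglyMeasurable (fun s => F s * s ^ (-1-β)) (volume.restrict t) := by
    intro t ht hmt
    apply ContinuousOn.aestronglyMeasurable _ hmt
    apply ContinuousOn.mul hcont.continuousOn
    intro s hs
    exact (Real.continuousAt_rpow_const s _ (Or.inl (ne_of_gt (ht hs)))).continuousWithinAt
  have hsplit : Set.Ioi (0:ℝ) = Set.Ioc (0:ℝ) 1 ∪ Set.Ioi 1 := by
    rw [Set.Ioc_union_Ioi_eq_Ioi]; norm_num
  rw [hsplit]
  apply MeasureTheory.IntegrableOn.union
  · -- on (0,1]
    have hint : MeasureTheory.IntegrableOn (fun s : ℝ => C * s ^ ((m:ℝ) - 1 - β))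
        (Set.Ioc (0:ℝ) 1) := by
      apply MeasureTheory.Integrable.const_mul
      exact (intervalIntegrable_iff_integrableOn_Ioc_of_le (by norm_num : (0:ℝ) ≤ 1)).mp
        (intervalIntegral.intervalIntegrable_rpow' (by linarith))
    apply MeasureTheory.Integrable.mono' hint
      (hmeas _ Set.Ioc_subset_Ioi_self measurableSet_Ioc)
    · filter_upwards [MeasureTheory.ae_restrict_mem measurableSet_Ioc] with s hs
      rw [Real.norm_eq_abs, abs_mul]
      have h1 : |s ^ (-1-β)| = s ^ (-1-β) := abs_of_nonneg (Real.rpow_nonneg hs.1.le _)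
      rw [h1]
      calc |F s| * s ^ (-1-β) ≤ (C * s ^ (m:ℝ)) * s ^ (-1-β) := by
            apply mul_le_mul_of_nonneg_right (hbound1 s hs) (Real.rpow_nonneg hs.1.le _)
        _ = C * s ^ ((m:ℝ) - 1 - β) := by
            rw [mul_assoc, ← Real.rpow_add hs.1]; ring_nf
  · -- on (1,∞)
    have hint : MeasureTheory.IntegrableOn (fun s : ℝ => M * s ^ (-1-β))
        (Set.Ioi (1:ℝ)) := by
      apply MeasureTheory.Integrable.const_mul
      exact integrableOn_Ioi_rpow_of_lt (by linarith) one_pos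
    apply MeasureTheory.Integrable.mono' hint
      (hmeas _ (fun s hs => lt_trans one_pos (Set.mem_Ioi.mp hs)) measurableSet_Ioi)
    · filter_upwards [MeasureTheory.ae_restrict_mem measurableSet_Ioi] with s hs
      rw [Real.norm_eq_abs, abs_mul]
      have hs0 : (0:ℝ) < s := lt_trans one_pos hs
      rw [abs_of_nonneg (Real.rpow_nonneg hs0.le _)]
      exact mul_le_mul_of_nonneg_right (hbound2 s hs.le) (Real.rpow_nonneg hs0.le _)

/-- positivity of integrals: a nonnegative integrand bounded below on an interval -/
lemma integral_kernel_pos {f : ℝ → ℝ} (hint : MeasureTheory.IntegrableOn f (Set.Ioi (0:ℝ)))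
    (hnn : ∀ s ∈ Set.Ioi (0:ℝ), 0 ≤ f s) {c u v : ℝ} (hc : 0 < c) (h0u : 0 < u) (huv : u < v)
    (hlb : ∀ s ∈ Set.Ioc u v, c ≤ f s) :
    0 < ∫ s in Set.Ioi (0:ℝ), f s := by
  have h1 : c * (volume (Set.Ioc u v)).toReal ≤ ∫ s in Set.Ioc u v, f s := by
    apply MeasureTheory.setIntegral_ge_of_const_le_real measurableSet_Ioc
      (by simp) hlb
    exact hint.mono_set (fun s hs => lt_trans h0u hs.1)
  have h2 : ∫ s in Set.Ioc u v, f s ≤ ∫ s in Set.Ioi (0:ℝ), f s := by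
    apply MeasureTheory.setIntegral_mono_set hint
    · filter_upwards [MeasureTheory.ae_restrict_mem measurableSet_Ioi] with s hs
      exact hnn s hs
    · exact HasSubset.Subset.eventuallyLE (fun s hs => lt_trans h0u hs.1)
  have hv : (volume (Set.Ioc u v)).toReal = v - u := by
    rw [Real.volume_Ioc, ENNReal.toReal_ofReal (by linarith)]
  rw [hv] at h1
  nlinarith

/-! ### The cosine kernel -/

noncomputable def cosInt (p t : ℝ) : ℝ :=
  ∫ s in Set.Ioi (0:ℝ), (1 - Real.cos (t * s)) * s ^ (-1-p)

lemma cos_bound1 (t : ℝ) : ∀ s ∈ Set.Ioc (0:ℝ) 1, |1 - Real.cos (t * s)| ≤ (t^2/2) * s ^ ((2:ℕ):ℝ) := by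
  intro s hs
  have h1 : 1 - Real.cos (t*s) ≤ (t*s)^2/2 := by
    have := Real.one_sub_sq_div_two_le_cos (x := t*s)
    linarith
  have h2 : 0 ≤ 1 - Real.cos (t*s) := by linarith [Real.cos_le_one (t*s)]
  rw [abs_of_nonneg h2]
  have : s ^ ((2:ℕ):ℝ) = s^2 := by
    rw [Real.rpow_natCast]
  rw [this]
  nlinarith [sq_nonneg t, sq_nonneg s]

lemma cos_bound2 (t : ℝ) : ∀ s : ℝ, 1 ≤ s → |1 - Real.cos (t * s)| ≤ 2 := by
  intro s _
  rw [abs_le]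
  constructor <;> nlinarith [Real.cos_le_one (t*s), Real.neg_one_le_cos (t*s)]

lemma cosInt_integrable {p : ℝ} (hp1 : 0 < p) (hp2 : p < 2) (t : ℝ) :
    MeasureTheory.IntegrableOn (fun s => (1 - Real.cos (t * s)) * s ^ (-1-p))
      (Set.Ioi (0:ℝ)) := by
  apply integrableOn_kernel (by continuity) hp1 (by exact_mod_cast hp2)
    (cos_bound1 t) (cos_bound2 t)

lemma cosInt_eq {p : ℝ} (hp1 : 0 < p) (t : ℝ) :
    cosInt p t = |t| ^ p * cosInt p 1 := by
  rcases eq_or_ne t 0 with rfl | ht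
  · simp [cosInt, Real.zero_rpow (ne_of_gt hp1)]
  · have habs : ∀ s : ℝ, Real.cos (t * s) = Real.cos (|t| * s) := by
      intro s
      rcases abs_choice t with h | h
      · rw [h]
      · rw [h]; rw [neg_mul, Real.cos_neg]
    have h0 : cosInt p t = ∫ s in Set.Ioi (0:ℝ), (fun u => 1 - Real.cos u) (|t| * s) * s ^ (-1-p) := by
      unfold cosInt
      congr 1
      ext s
      rw [habs s]
    rw [h0, integral_scaling (fun u => 1 - Real.cos u) (abs_pos.mpr ht)]
    have : -(-1-p) - 1 = p := by ring
    rw [this]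
    congr 1
    unfold cosInt
    congr 1
    ext s
    rw [one_mul]

lemma cosInt_one_pos {p : ℝ} (hp1 : 0 < p) (hp2 : p < 2) : 0 < cosInt p 1 := by
  unfold cosInt
  apply integral_kernel_pos (cosInt_integrable hp1 hp2 1)
    (c := (1 - Real.cos 1) * 2 ^ (-1-p)) (u := 1) (v := 2)
  · intro s hs
    apply mul_nonneg
    · linarith [Real.cos_le_one (1*s)]
    · exact Real.rpow_nonneg (le_of_lt hs) _
  · apply mul_pos
    · have : Real.cos 1 < Real.cos 0 := by
        apply Real.cos_lt_cos_of_nonneg_of_le_pi le_rfl (by linarith [Real.pi_gt_three]) one_pos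
      rw [Real.cos_zero] at this; linarith
    · exact Real.rpow_pos_of_pos two_pos _
  · exact one_pos
  · exact one_lt_two
  · intro s hs
    have hs0 : (0:ℝ) < s := lt_trans one_pos hs.1
    apply mul_le_mul
    · rw [one_mul]
      have : Real.cos s ≤ Real.cos 1 :=
        Real.cos_le_cos_of_nonneg_of_le_pi zero_le_one
          (by linarith [Real.pi_gt_three, hs.2]) hs.1.le
      linarith
    · exact Real.rpow_le_rpow_of_nonpos hs0 hs.2 (by linarith)
    · exact Real.rpow_nonneg two_pos.le _
    · linarith [Real.cos_le_one (1*s)]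

lemma sum_sq_expand {k : ℕ} (b : Fin k → ℝ) :
    ∑ i, ∑ j, b i * b j = (∑ i, b i)^2 := by
  rw [sq, Finset.sum_mul_sum]

/-- negative definiteness of |a-b|^p on ℝ, 1 ≤ p ≤ 2 -/
lemma real_neg_def {p : ℝ} (hp1 : 1 ≤ p) (hp2 : p ≤ 2) {k : ℕ}
    (a : Fin k → ℝ) (η : Fin k → ℝ) (hη : ∑ i, η i = 0) :
    ∑ i, ∑ j, η i * η j * |a i - a j| ^ p ≤ 0 := by
  rcases eq_or_lt_of_le hp2 with rfl | hp2'
  · -- p = 2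
    have key : ∑ i, ∑ j, η i * η j * |a i - a j| ^ (2:ℝ)
        = -2 * (∑ i, η i * a i)^2 := by
      have e1 : ∀ i : Fin k, ∑ j, η i * η j * |a i - a j| ^ (2:ℝ)
          = η i * a i^2 * (∑ j, η j) + η i * (∑ j, η j * a j^2)
            - 2 * (η i * a i) * (∑ j, η j * a j) := by
        intro i
        simp only [Finset.mul_sum]
        rw [← Finset.sum_add_distrib, ← Finset.sum_sub_distrib]
        apply Finset.sum_congr rfl; intro j _
        have : |a i - a j| ^ (2:ℝ) = (a i - a j)^2 := by
          rw [show ((2:ℝ)) = ((2:ℕ):ℝ) by norm_num, Real.rpow_natCast, sq_abs]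
        rw [this]; ring
      simp_rw [e1, hη]
      simp only [mul_zero, zero_add]
      rw [Finset.sum_sub_distrib, ← Finset.sum_mul, hη, zero_mul]
      have e3 : ∑ x : Fin k, 2 * (η x * a x) * (∑ j, η j * a j)
          = 2 * ((∑ x, η x * a x) * (∑ j, η j * a j)) := by
        rw [← Finset.sum_mul, ← Finset.mul_sum, mul_assoc]
      rw [e3]
      ring
    rw [key]
    nlinarith [sq_nonneg (∑ i, η i * a i)]
  · -- p < 2
    have hp0 : 0 < p := by linarith
    have hJ : 0 < cosInt p 1 := cosInt_one_pos hp0 hp2'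
    have hrep : ∀ i j, η i * η j * |a i - a j| ^ p
        = (η i * η j * cosInt p (a i - a j)) / cosInt p 1 := by
      intro i j
      rw [cosInt_eq hp0]
      field_simp
    simp_rw [hrep, ← Finset.sum_div]
    apply div_nonpos_of_nonpos_of_nonneg _ hJ.le
    -- ∑ i, ∑ j, η i * η j * cosInt p (a i - a j) ≤ 0
    have swap : ∑ i, ∑ j, η i * η j * cosInt p (a i - a j)
        = ∫ s in Set.Ioi (0:ℝ),
            ∑ i, ∑ j, η i * η j * ((1 - Real.cos ((a i - a j) * s)) * s ^ (-1-p)) := by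
      rw [MeasureTheory.integral_finset_sum]
      · apply Finset.sum_congr rfl; intro i _
        rw [MeasureTheory.integral_finset_sum]
        · apply Finset.sum_congr rfl; intro j _
          rw [MeasureTheory.integral_const_mul]
          rfl
        · intro j _
          exact ((cosInt_integrable hp0 hp2' (a i - a j)).const_mul _)
      · intro i _
        apply MeasureTheory.integrable_finset_sum
        intro j _
        exact ((cosInt_integrable hp0 hp2' (a i - a j)).const_mul _)
    rw [swap]
    apply MeasureTheory.setIntegral_nonpos measurableSet_Ioi
    intro s hsmem
    show ∑ i, ∑ j, η i * η j * ((1 - Real.cos ((a i - a j) * s)) * s ^ (-1-p)) ≤ 0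
    have e2 : ∀ i j : Fin k, η i * η j * ((1 - Real.cos ((a i - a j) * s)) * s ^ (-1-p))
        = (η i * η j - ((η i * Real.cos (a i * s)) * (η j * Real.cos (a j * s))
            + (η i * Real.sin (a i * s)) * (η j * Real.sin (a j * s)))) * s ^ (-1-p) := by
      intro i j
      have : (a i - a j) * s = a i * s - a j * s := by ring
      rw [this, Real.cos_sub]
      ring
    simp_rw [e2]
    simp only [← Finset.sum_mul]
    apply mul_nonpos_of_nonpos_of_nonneg
    · have e4 : ∀ i : Fin k, ∑ j, (η i * η j
          - (η i * Real.cos (a i * s) * (η j * Real.cos (a j * s))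
             + η i * Real.sin (a i * s) * (η j * Real.sin (a j * s))))
          = η i * (∑ j, η j)
            - (η i * Real.cos (a i * s) * (∑ j, η j * Real.cos (a j * s))
               + η i * Real.sin (a i * s) * (∑ j, η j * Real.sin (a j * s))) := by
        intro i
        rw [Finset.sum_sub_distrib, Finset.sum_add_distrib, ← Finset.mul_sum,
          ← Finset.mul_sum, ← Finset.mul_sum]
      simp_rw [e4, hη, mul_zero]
      rw [Finset.sum_sub_distrib, Finset.sum_add_distrib, Finset.sum_const, smul_zero,
        ← Finset.sum_mul, ← Finset.sum_mul]
      have := mul_self_nonneg (∑ j, η j * Real.cos (a j * s))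
      have := mul_self_nonneg (∑ j, η j * Real.sin (a j * s))
      linarith
    · exact Real.rpow_nonneg (le_of_lt hsmem) _

/-! ### The exponential (subordination) kernel -/

noncomputable def expInt (α r : ℝ) : ℝ :=
  ∫ s in Set.Ioi (0:ℝ), (1 - Real.exp (-(r * s))) * s ^ (-1-α)

lemma exp_term_nonneg {r s : ℝ} (hr : 0 ≤ r) (hs : 0 ≤ s) : 0 ≤ 1 - Real.exp (-(r * s)) := by
  have : Real.exp (-(r * s)) ≤ Real.exp 0 := Real.exp_le_exp.mpr (by nlinarith)
  rw [Real.exp_zero] at this; linarith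

lemma exp_term_le {r s : ℝ} (_hr : 0 ≤ r) (_hs : 0 ≤ s) : 1 - Real.exp (-(r * s)) ≤ r * s := by
  have := Real.add_one_le_exp (-(r * s))
  linarith

lemma expInt_integrable {α : ℝ} (hα0 : 0 < α) (hα1 : α < 1) {r : ℝ} (hr : 0 ≤ r) :
    MeasureTheory.IntegrableOn (fun s => (1 - Real.exp (-(r * s))) * s ^ (-1-α))
      (Set.Ioi (0:ℝ)) := by
  apply integrableOn_kernel (F := fun s => 1 - Real.exp (-(r * s))) (by continuity)
    (C := r) (M := 1) (m := 1) hα0 (by exact_mod_cast hα1)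
  · intro s hs
    rw [abs_of_nonneg (exp_term_nonneg hr hs.1.le)]
    calc 1 - Real.exp (-(r * s)) ≤ r * s := exp_term_le hr hs.1.le
      _ = r * s ^ ((1:ℕ):ℝ) := by rw [Nat.cast_one, Real.rpow_one]
  · intro s hs
    rw [abs_of_nonneg (exp_term_nonneg hr (by linarith))]
    have : 0 < Real.exp (-(r*s)) := Real.exp_pos _
    linarith

lemma expInt_eq {α : ℝ} (hα0 : 0 < α) {r : ℝ} (hr : 0 ≤ r) :
    expInt α r = r ^ α * expInt α 1 := by
  rcases eq_or_lt_of_le hr with rfl | hr'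
  · simp [expInt, Real.zero_rpow (ne_of_gt hα0)]
  · have h0 : expInt α r
        = ∫ s in Set.Ioi (0:ℝ), (fun u => 1 - Real.exp (-u)) (r * s) * s ^ (-1-α) := rfl
    rw [h0, integral_scaling (fun u => 1 - Real.exp (-u)) hr']
    have he : -(-1-α) - 1 = α := by ring
    rw [he]
    congr 1
    unfold expInt
    congr 1
    ext s
    rw [one_mul]

lemma expInt_one_pos {α : ℝ} (hα0 : 0 < α) (hα1 : α < 1) : 0 < expInt α 1 := by
  unfold expInt
  apply integral_kernel_pos (expInt_integrable hα0 hα1 zero_le_one)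
    (c := (1 - Real.exp (-1)) * 2 ^ (-1-α)) (u := 1) (v := 2)
  · intro s hs
    exact mul_nonneg (exp_term_nonneg zero_le_one (le_of_lt hs))
      (Real.rpow_nonneg (le_of_lt hs) _)
  · apply mul_pos
    · have : Real.exp (-1) < Real.exp 0 := Real.exp_lt_exp.mpr (by norm_num)
      rw [Real.exp_zero] at this; linarith
    · exact Real.rpow_pos_of_pos two_pos _
  · exact one_pos
  · exact one_lt_two
  · intro s hs
    have hs0 : (0:ℝ) < s := lt_trans one_pos hs.1
    apply mul_le_mul
    · rw [one_mul]
      have : Real.exp (-s) ≤ Real.exp (-1) := Real.exp_le_exp.mpr (by linarith [hs.1])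
      linarith
    · exact Real.rpow_le_rpow_of_nonpos hs0 hs.2 (by linarith)
    · exact Real.rpow_nonneg two_pos.le _
    · linarith [exp_term_nonneg (zero_le_one' ℝ) hs0.le]

/-! ### Lp distance as an integral -/

lemma dist_pow_eq_integral {Ω : Type*} [MeasurableSpace Ω] (μ : Measure Ω) {p : ℝ}
    (hp : 1 ≤ p) [Fact (1 ≤ ENNReal.ofReal p)]
    (u v : Lp ℝ (ENNReal.ofReal p) μ) :
    dist u v ^ p = ∫ ω, |(u : Ω → ℝ) ω - (v : Ω → ℝ) ω| ^ p ∂μ := by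
  have hp0 : 0 < p := lt_of_lt_of_le one_pos hp
  have hP0 : ENNReal.ofReal p ≠ 0 := by
    simp only [ne_eq, ENNReal.ofReal_eq_zero, not_le]; linarith
  have hPt : ENNReal.ofReal p ≠ ⊤ := ENNReal.ofReal_ne_top
  have hPtoReal : (ENNReal.ofReal p).toReal = p := ENNReal.toReal_ofReal hp0.le
  have hmem : MemLp (⇑(u - v)) (ENNReal.ofReal p) μ := Lp.memLp (u - v)
  have hnorm := hmem.eLpNorm_eq_integral_rpow_norm hP0 hPt
  have hInn : 0 ≤ ∫ a, ‖(⇑(u-v)) a‖ ^ p ∂μ :=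
    integral_nonneg fun a => by positivity
  have hid : dist u v = (∫ a, ‖(⇑(u-v)) a‖ ^ p ∂μ) ^ p⁻¹ := by
    rw [dist_eq_norm, MeasureTheory.Lp.norm_def, hnorm, hPtoReal,
      ENNReal.toReal_ofReal (Real.rpow_nonneg hInn _)]
  rw [hid, ← Real.rpow_mul hInn, inv_mul_cancel₀ hp0.ne', Real.rpow_one]
  apply integral_congr_ae
  filter_upwards [Lp.coeFn_sub u v] with ω hω
  rw [hω]
  simp [Real.norm_eq_abs]

end Aux

/-- A metric space isometric to a subset of `L_p(μ)` (`1 ≤ p ≤ 2`) has strict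
`q`-negative type for all `q ∈ [0,p)`. -/
theorem strictNegType_of_isometry_Lp {X : Type*} [MetricSpace X]
    {Ω : Type*} [MeasurableSpace Ω] (μ : Measure Ω)
    (p : ℝ) (hp1 : 1 ≤ p) (hp2 : p ≤ 2)
    [Fact (1 ≤ ENNReal.ofReal p)]
    (f : X → Lp ℝ (ENNReal.ofReal p) μ) (hf : Isometry f) :
    ∀ q : ℝ, 0 ≤ q → q < p → HasStrictNegType X q := by
  intro q hq0 hqp
  have hp0 : (0:ℝ) < p := lt_of_lt_of_le one_pos hp1
  have core : ∀ (k : ℕ), 2 ≤ k → ∀ (x : Fin k → X), Function.Injective x →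
      ∀ (η : Fin k → ℝ), (∑ i, η i) = 0 → η ≠ 0 →
      (∑ i, ∑ j, negKer q (x i) (x j) * η i * η j) < 0 := by
    intro k hk2 x hinj η hsum hne
    have hk0 : 0 < k := by omega
    obtain ⟨i₁, hi₁⟩ : ∃ i, η i ≠ 0 := by
      by_contra h
      push_neg at h
      exact hne (funext h)
    have hc : 0 < ∑ i, η i ^ 2 :=
      Finset.sum_pos' (fun i _ => sq_nonneg _) ⟨i₁, Finset.mem_univ _, by positivity⟩
    rcases eq_or_lt_of_le hq0 with rfl | hq0'
    · -- q = 0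
      have e : ∀ i : Fin k, ∑ j, negKer 0 (x i) (x j) * η i * η j
          = η i * (∑ j, η j) - η i * η i := by
        intro i
        have eterm : ∀ j : Fin k, negKer 0 (x i) (x j) * η i * η j
            = η i * η j - (if j = i then η i * η j else 0) := by
          intro j
          by_cases h : j = i
          · subst h
            simp [negKer]
          · have hx : x i ≠ x j := fun e' => h (hinj e'.symm)
            simp only [negKer, if_neg hx, Real.rpow_zero, if_neg h, one_mul, sub_zero]
        simp_rw [eterm]
        rw [Finset.sum_sub_distrib, ← Finset.mul_sum,
          Finset.sum_ite_eq' Finset.univ i (fun j => η i * η j)]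
        simp
      simp_rw [e, hsum, mul_zero]
      rw [Finset.sum_sub_distrib, Finset.sum_const, smul_zero]
      have : 0 < ∑ i, η i * η i := by
        have : ∀ i : Fin k, η i * η i = η i ^ 2 := fun i => (sq (η i)).symm
        simp_rw [this]
        exact hc
      linarith
    · -- 0 < q
      have hα0 : 0 < q / p := div_pos hq0' hp0
      have hα1 : q / p < 1 := (div_lt_one hp0).mpr hqp
      set α : ℝ := q / p with hα
      set y : Fin k → Lp ℝ (ENNReal.ofReal p) μ := fun i => f (x i) with hy
      set r : Fin k → Fin k → ℝ := fun i j => dist (y i) (y j) ^ p with hrdef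
      have hrsymm : ∀ i j, r i j = r j i := fun i j => by simp [hrdef, dist_comm]
      have hrnn : ∀ i j, 0 ≤ r i j := fun i j => Real.rpow_nonneg dist_nonneg _
      have hrdiag : ∀ i, r i i = 0 := fun i => by
        simp [hrdef, Real.zero_rpow hp0.ne']
      have hrpos : ∀ i j, i ≠ j → 0 < r i j := by
        intro i j hij
        have hyne : y i ≠ y j := by
          intro e'
          exact hij (hinj (hf.injective e'))
        exact Real.rpow_pos_of_pos (dist_pos.mpr hyne) p
      have hker : ∀ i j, negKer q (x i) (x j) = r i j ^ α := by
        intro i j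
        by_cases h : x i = x j
        · have hij : i = j := hinj h
          subst hij
          simp [negKer, hrdiag i, Real.zero_rpow (ne_of_gt hα0)]
        · have h1 : negKer q (x i) (x j) = dist (x i) (x j) ^ q := by
            simp [negKer, h]
          rw [h1]
          have hd : dist (x i) (x j) = dist (y i) (y j) := (hf.dist_eq _ _).symm
          rw [hd]
          show dist (y i) (y j) ^ q = (dist (y i) (y j) ^ p) ^ α
          rw [← Real.rpow_mul dist_nonneg]
          congr 1
          rw [hα]
          field_simp
      have hrint : ∀ i j, r i j = ∫ ω, |(y i : Ω → ℝ) ω - (y j : Ω → ℝ) ω| ^ p ∂μ := by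
        intro i j
        exact dist_pow_eq_integral μ hp1 (y i) (y j)
      have hintg : ∀ i j : Fin k,
          Integrable (fun ω => |(y i : Ω → ℝ) ω - (y j : Ω → ℝ) ω| ^ p) μ := by
        intro i j
        have hmem : MemLp (⇑(y i - y j)) (ENNReal.ofReal p) μ := Lp.memLp _
        have hi2 := hmem.integrable_norm_rpow
          (by simp only [ne_eq, ENNReal.ofReal_eq_zero, not_le]; linarith)
          ENNReal.ofReal_ne_top
        rw [ENNReal.toReal_ofReal hp0.le] at hi2
        apply hi2.congr
        filter_upwards [Lp.coeFn_sub (y i) (y j)] with ω hω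
        rw [hω]
        simp [Real.norm_eq_abs]
      have hrnd : ∀ ζ : Fin k → ℝ, (∑ i, ζ i) = 0 →
          ∑ i, ∑ j, ζ i * ζ j * r i j ≤ 0 := by
        intro ζ hζ
        have swap : ∑ i, ∑ j, ζ i * ζ j * r i j
            = ∫ ω, ∑ i, ∑ j, ζ i * ζ j * |(y i : Ω → ℝ) ω - (y j : Ω → ℝ) ω| ^ p ∂μ := by
          rw [MeasureTheory.integral_finset_sum]
          · apply Finset.sum_congr rfl; intro i _
            rw [MeasureTheory.integral_finset_sum]
            · apply Finset.sum_congr rfl; intro j _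
              rw [MeasureTheory.integral_const_mul, ← hrint i j]
            · intro j _; exact (hintg i j).const_mul _
          · intro i _
            exact integrable_finset_sum _ (fun j _ => (hintg i j).const_mul _)
        rw [swap]
        apply MeasureTheory.integral_nonpos
        intro ω
        exact real_neg_def hp1 hp2 (fun i => (y i : Ω → ℝ) ω) ζ hζ
      have hQ : ∀ s : ℝ, 0 ≤ s →
          0 ≤ ∑ i, ∑ j, η i * η j * Real.exp (-(r i j * s)) := by
        intro s hs
        exact neg_exp_psd hk0 (fun i j => r i j * s)
          (fun i j => by show r i j * s = r j i * s; rw [hrsymm i j])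
          (fun i => by show r i i * s = 0; rw [hrdiag i, zero_mul])
          (fun ζ hζ => by
            show ∑ i, ∑ j, ζ i * ζ j * (r i j * s) ≤ 0
            have e5 : ∑ i, ∑ j, ζ i * ζ j * (r i j * s)
                = (∑ i, ∑ j, ζ i * ζ j * r i j) * s := by
              rw [Finset.sum_mul]
              apply Finset.sum_congr rfl; intro i _
              rw [Finset.sum_mul]
              apply Finset.sum_congr rfl; intro j _
              ring
            rw [e5]
            exact mul_nonpos_of_nonpos_of_nonneg (hrnd ζ hζ) hs) η
      have hE1 : 0 < expInt α 1 := expInt_one_pos hα0 hα1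
      have hswap : ∑ i, ∑ j, η i * η j * expInt α (r i j)
          = ∫ s in Set.Ioi (0:ℝ),
              ∑ i, ∑ j, η i * η j * ((1 - Real.exp (-(r i j * s))) * s ^ (-1-α)) := by
        rw [MeasureTheory.integral_finset_sum]
        · apply Finset.sum_congr rfl; intro i _
          rw [MeasureTheory.integral_finset_sum]
          · apply Finset.sum_congr rfl; intro j _
            rw [MeasureTheory.integral_const_mul]
            rfl
          · intro j _; exact (expInt_integrable hα0 hα1 (hrnn i j)).const_mul _
        · intro i _
          exact integrable_finset_sum _
            (fun j _ => (expInt_integrable hα0 hα1 (hrnn i j)).const_mul _)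
      have hpt : ∀ s ∈ Set.Ioi (0:ℝ),
          ∑ i, ∑ j, η i * η j * ((1 - Real.exp (-(r i j * s))) * s ^ (-1-α))
          = -((∑ i, ∑ j, η i * η j * Real.exp (-(r i j * s))) * s ^ (-1-α)) := by
        intro s _
        have e1 : ∀ i j : Fin k, η i * η j * ((1 - Real.exp (-(r i j * s))) * s ^ (-1-α))
            = (η i * η j - η i * η j * Real.exp (-(r i j * s))) * s ^ (-1-α) := by
          intro i j; ring
        simp_rw [e1]
        simp only [← Finset.sum_mul]
        have e2 : ∑ i, ∑ j, (η i * η j - η i * η j * Real.exp (-(r i j * s)))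
            = (∑ i, ∑ j, η i * η j)
              - ∑ i, ∑ j, η i * η j * Real.exp (-(r i j * s)) := by
          rw [← Finset.sum_sub_distrib]
          apply Finset.sum_congr rfl; intro i _
          rw [← Finset.sum_sub_distrib]
        rw [e2, sum_sq_expand, hsum]
        ring
      have hIsum : MeasureTheory.IntegrableOn
          (fun s => ∑ i, ∑ j, η i * η j * ((1 - Real.exp (-(r i j * s))) * s ^ (-1-α)))
          (Set.Ioi (0:ℝ)) := by
        apply MeasureTheory.integrable_finset_sum
        intro i _
        apply MeasureTheory.integrable_finset_sum
        intro j _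
        exact (expInt_integrable hα0 hα1 (hrnn i j)).const_mul _
      have hQtend : Filter.Tendsto
          (fun s => ∑ i, ∑ j, η i * η j * Real.exp (-(r i j * s)))
          Filter.atTop (nhds (∑ i, η i ^ 2)) := by
        have hlim : (∑ i, η i ^ 2)
            = ∑ i, ∑ j, (if i = j then η i * η j else 0) := by
          apply Finset.sum_congr rfl; intro i _
          simp [Finset.sum_ite_eq, sq]
        rw [hlim]
        apply tendsto_finset_sum; intro i _
        apply tendsto_finset_sum; intro j _
        by_cases hij : i = j
        · subst hij
          simp only [if_pos rfl, hrdiag i, zero_mul, neg_zero, Real.exp_zero, mul_one]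
          exact tendsto_const_nhds
        · simp only [if_neg hij]
          have h1 : Filter.Tendsto (fun s : ℝ => r i j * s) Filter.atTop Filter.atTop :=
            Filter.Tendsto.const_mul_atTop (hrpos i j hij) Filter.tendsto_id
          have h2 : Filter.Tendsto (fun s : ℝ => -(r i j * s)) Filter.atTop Filter.atBot :=
            Filter.tendsto_neg_atTop_atBot.comp h1
          have h3 : Filter.Tendsto (fun s => Real.exp (-(r i j * s)))
              Filter.atTop (nhds 0) := Real.tendsto_exp_atBot.comp h2
          have h4 := h3.const_mul (η i * η j)
          simpa using h4
      have hev : ∀ᶠ s in Filter.atTop,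
          (∑ i, η i ^ 2)/2 ≤ ∑ i, ∑ j, η i * η j * Real.exp (-(r i j * s)) :=
        hQtend.eventually (eventually_ge_nhds (by linarith))
      obtain ⟨S₀, hS₀⟩ := Filter.eventually_atTop.mp hev
      set S : ℝ := max S₀ 1 with hSdef
      have hS1 : (1:ℝ) ≤ S := le_max_right _ _
      have hSpos : (0:ℝ) < S := lt_of_lt_of_le one_pos hS1
      have hIg : MeasureTheory.IntegrableOn
          (fun s => (∑ i, ∑ j, η i * η j * Real.exp (-(r i j * s))) * s ^ (-1-α))
          (Set.Ioi (0:ℝ)) := by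
        apply MeasureTheory.IntegrableOn.congr_fun hIsum.neg _ measurableSet_Ioi
        intro s hs
        show -(∑ i, ∑ j, η i * η j * ((1 - Real.exp (-(r i j * s))) * s ^ (-1-α)))
            = (∑ i, ∑ j, η i * η j * Real.exp (-(r i j * s))) * s ^ (-1-α)
        rw [hpt s hs, neg_neg]
      have hgpos : 0 < ∫ s in Set.Ioi (0:ℝ),
          (∑ i, ∑ j, η i * η j * Real.exp (-(r i j * s))) * s ^ (-1-α) := by
        apply integral_kernel_pos hIg
          (fun s hs => mul_nonneg (hQ s (le_of_lt hs)) (Real.rpow_nonneg (le_of_lt hs) _))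
          (c := ((∑ i, η i ^ 2)/2) * (S+1) ^ (-1-α)) (u := S) (v := S+1)
        · exact mul_pos (by linarith) (Real.rpow_pos_of_pos (by linarith) _)
        · exact hSpos
        · linarith
        · intro s hs
          have hs0 : (0:ℝ) < s := lt_trans hSpos hs.1
          apply mul_le_mul
          · exact hS₀ s (le_trans (le_max_left _ _) hs.1.le)
          · exact Real.rpow_le_rpow_of_nonpos hs0 hs.2 (by linarith)
          · exact Real.rpow_nonneg (by linarith) _
          · exact hQ s hs0.le
      have hfinal : ∑ i, ∑ j, negKer q (x i) (x j) * η i * η j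
          = -(∫ s in Set.Ioi (0:ℝ),
              (∑ i, ∑ j, η i * η j * Real.exp (-(r i j * s))) * s ^ (-1-α)) / expInt α 1 := by
        have e0 : ∀ i j, negKer q (x i) (x j) * η i * η j
            = (η i * η j * expInt α (r i j)) / expInt α 1 := by
          intro i j
          rw [hker i j, expInt_eq hα0 (hrnn i j)]
          field_simp
        simp_rw [e0, ← Finset.sum_div]
        rw [hswap]
        congr 1
        rw [MeasureTheory.setIntegral_congr_fun measurableSet_Ioi hpt,
          MeasureTheory.integral_neg]
      rw [hfinal]
      apply div_neg_of_neg_of_pos _ hE1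
      linarith [hgpos]
  constructor
  · intro k hk2 x hinj η hsum
    by_cases hη : η = 0
    · subst hη
      simp
    · exact (core k hk2 x hinj η hsum hη).le
  · exact core
end
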